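/- arXiv:1307.3747 — 7 statements merged into one kernel-verified Lean document; each statement's English description precedes it below -/
import Mathlib

section
/- Let Φ be a Drinfeld module of generic characteristic in normal form with good reduction at a finite place v of K (i.e., the coefficients of Φ_t are v-integral and Φ_t is monic). For any real number s with 0 < s < 1, there exist at most finitely many torsion points x of Φ with |x|_v < s. -/
open Polynomial

/-- Ultrametric bound for finite sums. -/
lemma nonarch_sum_le {K : Type*} [Field K] (v : AbsoluteValue K ℝ)
    (hna : ∀ x y : K, v (x + y) ≤ max (v x) (v y))
    {ι : Type*} (S : Finset ι) (f : ι → K) (C : ℝ) (hC : 0 ≤ C) :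
    (∀ i ∈ S, v (f i) ≤ C) → v (∑ i ∈ S, f i) ≤ C := by
  classical
  induction S using Finset.cons_induction with
  | empty => intro _; simpa using hC
  | cons a s ha ih =>
    intro h
    rw [Finset.sum_cons]
    exact le_trans (hna _ _) (max_le (h a (Finset.mem_cons_self a s))
      (ih fun i hi => h i (Finset.mem_cons_of_mem hi)))



/-- A Drinfeld module of generic characteristic `Φ : F_q[t] → End(G_a)` over a field `K`,
recorded through the polynomials `Φ_a ∈ K[x]`: `Φ` is additive, turns multiplication into
composition, each `Φ_a` has zero constant term, linear coefficient the image of `a` under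
the structure map `alg : F_q[t] → K` (generic characteristic: `alg` injective), positive
degree for `a ≠ 0`, and coefficients supported at `q`-power degrees (F_q-linearity). -/
structure DrinfeldModuleData (Fq K : Type*) [Field Fq] [Fintype Fq] [Field K] where
  toFun : Polynomial Fq → Polynomial K
  alg : Polynomial Fq →+* K
  map_one' : toFun 1 = Polynomial.X
  map_add' : ∀ a b, toFun (a + b) = toFun a + toFun b
  map_mul' : ∀ a b, toFun (a * b) = (toFun a).comp (toFun b)
  coeff_zero' : ∀ a, (toFun a).coeff 0 = 0
  coeff_one' : ∀ a, (toFun a).coeff 1 = alg a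
  degree_pos' : ∀ a, a ≠ 0 → 0 < (toFun a).natDegree
  supp_q_pow' : ∀ a i, (toFun a).coeff i ≠ 0 → ∃ k : ℕ, i = Fintype.card Fq ^ k
  alg_injective' : Function.Injective alg

/-- Let `Φ` be a Drinfeld module of generic characteristic in normal form with
good reduction at a finite place `v` (all coefficients of each `Φ_a` are `v`-integral and
leading coefficients are `v`-adic units, in particular `Φ_t` monic). For any real `s` with
`0 < s < 1` there are at most finitely many torsion points `x` with `|x|_v < s`. -/
theorem stmt_4 (Fq K : Type*) [Field Fq] [Fintype Fq] [Field K]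
    (Φ : DrinfeldModuleData Fq K)
    (v : AbsoluteValue K ℝ)
    (hna : ∀ x y : K, v (x + y) ≤ max (v x) (v y))
    (hgood : ∀ (a : Polynomial Fq) (i : ℕ), v ((Φ.toFun a).coeff i) ≤ 1)
    (hmonic : ∀ a : Polynomial Fq, a ≠ 0 → v ((Φ.toFun a).leadingCoeff) = 1)
    (s : ℝ) (hs0 : 0 < s) (hs1 : s < 1) :
    {x : K | (∃ Q : Polynomial Fq, Q ≠ 0 ∧ (Φ.toFun Q).eval x = 0) ∧ v x < s}.Finite := by
  classical
  set q := Fintype.card Fq with hqdef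
  have hq2 : 2 ≤ q := Fintype.one_lt_card
  have hq0 : 0 < q - 1 := by omega
  -- basic facts
  have halg_le : ∀ a : Polynomial Fq, v (Φ.alg a) ≤ 1 := fun a => by
    rw [← Φ.coeff_one' a]; exact hgood a 1
  have halg_ne : ∀ a : Polynomial Fq, a ≠ 0 → Φ.alg a ≠ 0 := by
    intro a ha h
    exact ha (Φ.alg_injective' (by rw [h, map_zero]))
  have hcomp : ∀ a b (x : K), (Φ.toFun (a * b)).eval x
      = (Φ.toFun a).eval ((Φ.toFun b).eval x) := by
    intro a b x; rw [Φ.map_mul', eval_comp]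
  have heval0 : ∀ a, (Φ.toFun a).eval 0 = 0 := by
    intro a; rw [← Polynomial.coeff_zero_eq_eval_zero]; exact Φ.coeff_zero' a
  -- L1 : main ultrametric estimate
  have L1 : ∀ (a : Polynomial Fq) (x : K), v x ≤ 1 →
      v ((Φ.toFun a).eval x - Φ.alg a * x) ≤ v x ^ q := by
    intro a x hx
    set p := Φ.toFun a with hp
    have hsplit : p.eval x - Φ.alg a * x = (p.erase 1).eval x := by
      conv_lhs => rw [← Polynomial.monomial_add_erase p 1]
      rw [eval_add, eval_monomial, Φ.coeff_one' a]
      ring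
    rw [hsplit, Polynomial.eval_eq_sum, Polynomial.sum_def]
    apply nonarch_sum_le v hna _ _ _ (pow_nonneg (v.nonneg x) q)
    intro i hi
    have hi1 : i ≠ 1 := by
      intro h; subst h
      simp [Polynomial.mem_support_iff] at hi
    have hci : p.coeff i ≠ 0 := by
      have := Polynomial.mem_support_iff.1 hi
      rwa [Polynomial.erase_ne _ hi1] at this
    have hi0 : i ≠ 0 := by
      intro h; subst h; exact hci (Φ.coeff_zero' a)
    obtain ⟨k, hk⟩ := Φ.supp_q_pow' a i hci
    have hk0 : k ≠ 0 := by
      intro h; subst h; simp at hk; omega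
    have hqi : q ≤ i := by
      rw [hk]
      calc q = q ^ 1 := (pow_one q).symm
        _ ≤ q ^ k := Nat.pow_le_pow_right (by omega) (by omega)
    have hcoeff : v ((p.erase 1).coeff i) ≤ 1 := by
      rw [Polynomial.erase_ne _ hi1]; exact hgood a i
    calc v ((p.erase 1).coeff i * x ^ i)
        = v ((p.erase 1).coeff i) * v x ^ i := by rw [map_mul, map_pow]
      _ ≤ 1 * v x ^ i := by
          apply mul_le_mul_of_nonneg_right hcoeff (pow_nonneg (v.nonneg x) i)
      _ = v x ^ i := one_mul _
      _ ≤ v x ^ q := pow_le_pow_of_le_one (v.nonneg x) hx hqi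
  -- L2 : contraction
  have L2 : ∀ (a : Polynomial Fq) (x : K), v x ≤ 1 → v ((Φ.toFun a).eval x) ≤ v x := by
    intro a x hx
    have h1 : (Φ.toFun a).eval x = ((Φ.toFun a).eval x - Φ.alg a * x) + Φ.alg a * x := by ring
    rw [h1]
    refine le_trans (hna _ _) (max_le ?_ ?_)
    · exact le_trans (L1 a x hx) (pow_le_of_le_one (v.nonneg x) hx (by omega))
    · rw [map_mul]
      calc v (Φ.alg a) * v x ≤ 1 * v x :=
        mul_le_mul_of_nonneg_right (halg_le a) (v.nonneg x)
        _ = v x := one_mul _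
  -- L3' : torsion forces small multiplier
  have L3 : ∀ (a : Polynomial Fq) (x : K), v x ≤ 1 → x ≠ 0 →
      (Φ.toFun a).eval x = 0 → v (Φ.alg a) ≤ v x ^ (q - 1) := by
    intro a x hx hx0 hax
    have h1 : v (Φ.alg a * x) ≤ v x ^ q := by
      have : Φ.alg a * x = -((Φ.toFun a).eval x - Φ.alg a * x) := by rw [hax]; ring
      rw [this, v.map_neg]
      exact L1 a x hx
    rw [map_mul] at h1
    have hq' : q = (q - 1) + 1 := by omega
    rw [hq', pow_succ] at h1
    have hvx : 0 < v x := v.pos hx0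
    exact le_of_mul_le_mul_right h1 hvx
  -- case split on triviality of the reduction characteristic
  by_cases hcase : ∀ a : Polynomial Fq, a ≠ 0 → 1 ≤ v (Φ.alg a)
  · -- no element of small valuation: the set is {0}
    apply Set.Finite.subset (Set.finite_singleton (0 : K))
    rintro x ⟨⟨Q, hQ0, hQx⟩, hxs⟩
    by_contra hx0
    have hx1 : v x < 1 := lt_trans hxs hs1
    have h1 := hcase Q hQ0
    have h2 := L3 Q x (le_of_lt hx1) hx0 hQx
    have h3 : v x ^ (q - 1) < 1 := pow_lt_one₀ (v.nonneg x) hx1 (by omega)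
    linarith
  · push_neg at hcase
    obtain ⟨a₀, ha₀0, ha₀⟩ := hcase
    -- the prime of bad multipliers
    set I : Ideal (Polynomial Fq) :=
      { carrier := {a | v (Φ.alg a) < 1}
        add_mem' := by
          intro a b ha hb
          simp only [Set.mem_setOf_eq, map_add] at *
          exact lt_of_le_of_lt (hna _ _) (max_lt ha hb)
        zero_mem' := by simp
        smul_mem' := by
          intro c a ha
          simp only [Set.mem_setOf_eq, smul_eq_mul, map_mul] at *
          calc v (Φ.alg c) * v (Φ.alg a) ≤ 1 * v (Φ.alg a) :=
              mul_le_mul_of_nonneg_right (halg_le c) (v.nonneg _)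
            _ = v (Φ.alg a) := one_mul _
            _ < 1 := ha } with hIdef
    have hmemI : ∀ a : Polynomial Fq, a ∈ I ↔ v (Φ.alg a) < 1 := fun a => Iff.rfl
    obtain ⟨P, hPgen⟩ := (IsPrincipalIdealRing.principal I).principal
    have hPdvd : ∀ a : Polynomial Fq, a ∈ I ↔ P ∣ a := by
      intro a
      rw [hPgen, Ideal.submodule_span_eq, Ideal.mem_span_singleton]
    have hPI : v (Φ.alg P) < 1 := by
      rw [← hmemI, hPdvd]
    have hP0 : P ≠ 0 := by
      intro h
      obtain ⟨c, hc⟩ := (hPdvd a₀).1 ha₀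
      rw [hc, h, zero_mul] at ha₀0
      exact ha₀0 rfl
    have hPnu : ¬ IsUnit P := by
      intro h
      have h1 : P ∣ 1 := h.dvd
      have := (hPdvd 1).2 h1
      rw [hmemI, map_one, map_one] at this
      linarith
    set r := v (Φ.alg P) with hrdef
    have hr0 : 0 < r := v.pos (halg_ne P hP0)
    have hr1 : r < 1 := hPI
    -- every torsion point in the open unit disc is P-power torsion
    have hPtors : ∀ (Q : Polynomial Fq) (x : K), Q ≠ 0 → v x < 1 →
        (Φ.toFun Q).eval x = 0 → ∃ m, (Φ.toFun (P ^ m)).eval x = 0 := by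
      intro Q x hQ0 hx hQx
      obtain ⟨m, R, hR, hQR⟩ := WfDvdMonoid.max_power_factor' hQ0 hPnu
      refine ⟨m, ?_⟩
      set y := (Φ.toFun (P ^ m)).eval x with hy
      have hRy : (Φ.toFun R).eval y = 0 := by
        rw [hy, ← hcomp, mul_comm R (P ^ m), ← hQR, hQx]
      have hvy : v y ≤ v x := L2 _ _ (le_of_lt hx)
      by_contra hy0
      have hR1 : 1 ≤ v (Φ.alg R) := by
        by_contra h
        push_neg at h
        exact hR ((hPdvd R).1 h)
      have h2 := L3 R y (le_of_lt (lt_of_le_of_lt hvy hx)) hy0 hRy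
      have h3 : v y ^ (q - 1) < 1 :=
        pow_lt_one₀ (v.nonneg y) (lt_of_le_of_lt hvy hx) (by omega)
      linarith
    -- the contraction constant
    set κ := max r (s ^ (q - 1)) with hκdef
    have hκ0 : 0 ≤ κ := le_trans (le_of_lt hr0) (le_max_left _ _)
    have hκ1 : κ < 1 := max_lt hr1 (pow_lt_one₀ (le_of_lt hs0) hs1 (by omega))
    -- step bound : v (Φ_P x) ≤ κ * v x  when v x < s
    have hstep : ∀ x : K, v x < s → v ((Φ.toFun P).eval x) ≤ κ * v x := by
      intro x hx
      have hx1 : v x ≤ 1 := le_of_lt (lt_trans hx hs1)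
      have h1 : (Φ.toFun P).eval x = ((Φ.toFun P).eval x - Φ.alg P * x) + Φ.alg P * x := by ring
      rw [h1]
      refine le_trans (hna _ _) (max_le ?_ ?_)
      · refine le_trans (L1 P x hx1) ?_
        have hq' : q = (q - 1) + 1 := by omega
        rw [hq', pow_succ]
        apply mul_le_mul_of_nonneg_right _ (v.nonneg x)
        refine le_trans ?_ (le_max_right r (s ^ (q - 1)))
        exact pow_le_pow_left₀ (v.nonneg x) (le_of_lt hx) _
      · rw [map_mul]
        exact mul_le_mul_of_nonneg_right (le_max_left _ _) (v.nonneg x)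
    -- descent: minimal P-power annihilator gives a lower bound
    have hdesc : ∀ (m : ℕ) (x : K), v x < s → x ≠ 0 →
        (Φ.toFun (P ^ (m + 1))).eval x = 0 → (Φ.toFun (P ^ m)).eval x ≠ 0 →
        r ≤ κ ^ m * v x ^ (q - 1) := by
      intro m
      induction m with
      | zero =>
        intro x hx hx0 h1 _
        rw [pow_one] at h1
        rw [pow_zero, one_mul]
        exact L3 P x (le_of_lt (lt_trans hx hs1)) hx0 h1
      | succ m ih =>
        intro x hx hx0 h1 h2
        set w := (Φ.toFun P).eval x with hw
        have hw0 : w ≠ 0 := by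
          intro h
          apply h2
          have : (Φ.toFun (P ^ (m + 1))).eval x = (Φ.toFun (P ^ m)).eval w := by
            rw [← hcomp, ← pow_succ]
          rw [this, h, heval0]
        have hvw : v w ≤ κ * v x := hstep x hx
        have hvw' : v w < s := by
          have : κ * v x ≤ 1 * v x :=
            mul_le_mul_of_nonneg_right (le_of_lt hκ1) (v.nonneg x)
          rw [one_mul] at this
          exact lt_of_le_of_lt (le_trans hvw this) hx
        have h1' : (Φ.toFun (P ^ (m + 1))).eval w = 0 := by
          rw [← hcomp, ← pow_succ, h1]
        have h2' : (Φ.toFun (P ^ m)).eval w ≠ 0 := by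
          rw [← hcomp, ← pow_succ]
          exact h2
        have hIH := ih w hvw' hw0 h1' h2'
        have hκx : 0 ≤ κ * v x := mul_nonneg hκ0 (v.nonneg x)
        calc r ≤ κ ^ m * v w ^ (q - 1) := hIH
          _ ≤ κ ^ m * (κ * v x) ^ (q - 1) := by
              apply mul_le_mul_of_nonneg_left _ (pow_nonneg hκ0 m)
              exact pow_le_pow_left₀ (v.nonneg w) hvw _
          _ = κ ^ m * (κ ^ (q - 1) * v x ^ (q - 1)) := by rw [mul_pow]
          _ ≤ κ ^ m * (κ ^ 1 * v x ^ (q - 1)) := by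
              apply mul_le_mul_of_nonneg_left _ (pow_nonneg hκ0 m)
              apply mul_le_mul_of_nonneg_right _ (pow_nonneg (v.nonneg x) _)
              exact pow_le_pow_of_le_one hκ0 (le_of_lt hκ1) (by omega)
          _ = κ ^ (m + 1) * v x ^ (q - 1) := by ring
    -- uniform bound on the level
    obtain ⟨N, hN⟩ := exists_pow_lt_of_lt_one hr0 hκ1
    -- every point of the set is a root of Φ_{P^N}
    have hsub : {x : K | (∃ Q : Polynomial Fq, Q ≠ 0 ∧ (Φ.toFun Q).eval x = 0) ∧ v x < s}
        ⊆ {x : K | (Φ.toFun (P ^ N)).IsRoot x} := by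
      rintro x ⟨⟨Q, hQ0, hQx⟩, hxs⟩
      have hx1 : v x < 1 := lt_trans hxs hs1
      obtain ⟨m, hm⟩ := hPtors Q x hQ0 hx1 hQx
      have hE : ∃ m, (Φ.toFun (P ^ m)).eval x = 0 := ⟨m, hm⟩
      by_cases hx0 : x = 0
      · subst hx0
        exact heval0 _
      · set m₀ := Nat.find hE with hm₀def
        have hm₀ : (Φ.toFun (P ^ m₀)).eval x = 0 := Nat.find_spec hE
        have hm₀pos : m₀ ≠ 0 := by
          intro h
          rw [h, pow_zero, Φ.map_one', eval_X] at hm₀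
          exact hx0 hm₀
        obtain ⟨m₁, hm₁⟩ : ∃ m₁, m₀ = m₁ + 1 := ⟨m₀ - 1, by omega⟩
        have hmin : (Φ.toFun (P ^ m₁)).eval x ≠ 0 :=
          Nat.find_min hE (by omega)
        have hd := hdesc m₁ x hxs hx0 (hm₁ ▸ hm₀) hmin
        have hm₁N : m₁ < N := by
          by_contra h
          push_neg at h
          have h1 : κ ^ m₁ ≤ κ ^ N := pow_le_pow_of_le_one hκ0 (le_of_lt hκ1) h
          have h2 : v x ^ (q - 1) ≤ 1 :=
            pow_le_one₀ (v.nonneg x) (le_of_lt hx1)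
          have h3 : κ ^ m₁ * v x ^ (q - 1) ≤ κ ^ N * 1 := by
            apply mul_le_mul h1 h2 (pow_nonneg (v.nonneg x) _) (pow_nonneg hκ0 _)
          rw [mul_one] at h3
          linarith
        show (Φ.toFun (P ^ N)).eval x = 0
        have : (N - m₀) + m₀ = N := by omega
        rw [← this, pow_add, hcomp, hm₀, heval0]
    apply Set.Finite.subset _ hsub
    apply Polynomial.finite_setOf_isRoot
    intro h
    have := Φ.degree_pos' (P ^ N) (pow_ne_zero N hP0)
    rw [h] at this
    simp at this
end

section
/- Let Φ be a Drinfeld module in normal form with good reduction at a finite place v of K. For any z ∈ K̄ and any real number s with 0 < s < 1, there exist at most finitely many torsion points x of Φ with |z − x|_v < s. -/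
private lemma na_sum_le {K : Type*} [Field K] (v : AbsoluteValue K ℝ)
    (hna : ∀ x y : K, v (x + y) ≤ max (v x) (v y))
    {ι : Type*} (s : Finset ι) (f : ι → K) {B : ℝ} (hB : 0 ≤ B)
    (h : ∀ i ∈ s, v (f i) ≤ B) : v (∑ i ∈ s, f i) ≤ B := by
  classical
  induction s using Finset.induction_on with
  | empty => simpa using hB
  | @insert _ _ hx ih =>
      rw [Finset.sum_insert hx]
      refine le_trans (hna _ _) (max_le (h _ (Finset.mem_insert_self _ _))
        (ih fun i hi => h i (Finset.mem_insert_of_mem hi)))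

private lemma na_add_eq {K : Type*} [Field K] (v : AbsoluteValue K ℝ)
    (hna : ∀ x y : K, v (x + y) ≤ max (v x) (v y))
    {a b : K} (h : v b < v a) : v (a + b) = v a := by
  have h1 : v (a + b) ≤ v a := le_trans (hna a b) (max_le le_rfl h.le)
  have h2 : v a ≤ max (v (a + b)) (v (-b)) := by
    have := hna (a + b) (-b)
    simpa using this
  rw [v.map_neg] at h2
  rcases max_cases (v (a + b)) (v b) with ⟨he, _⟩ | ⟨he, _⟩
  · rw [he] at h2; exact le_antisymm h1 h2
  · rw [he] at h2; exact absurd (lt_of_le_of_lt h2 h) (lt_irrefl _)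

/-- Let `Φ` be a Drinfeld module in normal form with good reduction at a finite
place `v`. For any `z` and any real `s` with `0 < s < 1`, there are at most finitely many
torsion points `x` of `Φ` with `|z − x|_v < s`. -/
theorem stmt_5 (Fq K : Type*) [Field Fq] [Fintype Fq] [Field K]
    (Φ : DrinfeldModuleData Fq K)
    (v : AbsoluteValue K ℝ)
    (hna : ∀ x y : K, v (x + y) ≤ max (v x) (v y))
    (hgood : ∀ (a : Polynomial Fq) (i : ℕ), v ((Φ.toFun a).coeff i) ≤ 1)
    (hmonic : ∀ a : Polynomial Fq, a ≠ 0 → v ((Φ.toFun a).leadingCoeff) = 1)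
    (z : K) (s : ℝ) (hs0 : 0 < s) (hs1 : s < 1) :
    {x : K | (∃ Q : Polynomial Fq, Q ≠ 0 ∧ (Φ.toFun Q).eval x = 0) ∧ v (z - x) < s}.Finite := by
  classical
  set q := Fintype.card Fq with hqdef
  have hq2 : 2 ≤ q := Fintype.one_lt_card
  -- characteristic facts
  obtain ⟨p, hpi⟩ := CharP.exists Fq
  haveI := hpi
  have hp : p.Prime := CharP.char_is_prime Fq p
  haveI : Fact p.Prime := ⟨hp⟩
  haveI : CharP K p :=
    charP_of_injective_ringHom (Φ.alg.comp (Polynomial.C : Fq →+* Polynomial Fq)).injective p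
  obtain ⟨m, -, hcard⟩ := FiniteField.card Fq p
  -- the torsion predicate
  set Tor : K → Prop := fun x => ∃ Q : Polynomial Fq, Q ≠ 0 ∧ (Φ.toFun Q).eval x = 0 with hTor
  -- additivity of the polynomial maps
  have hsub : ∀ (a : Polynomial Fq) (x y : K),
      (Φ.toFun a).eval (x - y) = (Φ.toFun a).eval x - (Φ.toFun a).eval y := by
    intro a x y
    rw [Polynomial.eval_eq_sum, Polynomial.eval_eq_sum, Polynomial.eval_eq_sum,
      Polynomial.sum_def, Polynomial.sum_def, Polynomial.sum_def, ← Finset.sum_sub_distrib]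
    refine Finset.sum_congr rfl ?_
    intro i hi
    obtain ⟨k, hk⟩ := Φ.supp_q_pow' a i (Polynomial.mem_support_iff.mp hi)
    have hi' : i = p ^ ((m : ℕ) * k) := by rw [hk, pow_mul, ← hcard]
    rw [hi', sub_pow_char_pow, mul_sub]
  -- nonzero polynomials have finitely many roots
  have hΦne : ∀ a : Polynomial Fq, a ≠ 0 → Φ.toFun a ≠ 0 := by
    intro a ha h
    have := Φ.degree_pos' a ha
    rw [h] at this
    simp at this
  -- good-reduction bounds on `alg`
  have valg_le : ∀ a, v (Φ.alg a) ≤ 1 := by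
    intro a
    have := hgood a 1
    rwa [Φ.coeff_one'] at this
  have valg_pos : ∀ a, a ≠ 0 → 0 < v (Φ.alg a) := by
    intro a ha
    refine v.pos fun h => ha (Φ.alg_injective' ?_)
    rw [h, map_zero]
  -- key decomposition: Φ_a(x) = alg a * x + r with v r ≤ v x ^ q
  have key : ∀ (a : Polynomial Fq) (x : K), v x ≤ 1 →
      ∃ r : K, (Φ.toFun a).eval x = Φ.alg a * x + r ∧ v r ≤ v x ^ q := by
    intro a x hx
    set P := Φ.toFun a with hP
    set R := P - Polynomial.C (Φ.alg a) * Polynomial.X with hR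
    refine ⟨R.eval x, ?_, ?_⟩
    · rw [hR]
      simp only [Polynomial.eval_sub, Polynomial.eval_mul, Polynomial.eval_C, Polynomial.eval_X]
      ring
    · rw [Polynomial.eval_eq_sum, Polynomial.sum_def]
      refine na_sum_le v hna _ _ (pow_nonneg (v.nonneg x) q) ?_
      intro i hi
      have hiS := Polynomial.mem_support_iff.mp hi
      have hco : R.coeff i = P.coeff i - (if i = 1 then Φ.alg a else 0) := by
        rw [hR, Polynomial.coeff_sub, Polynomial.coeff_C_mul_X]
      by_cases h1 : i = 1
      · exfalso
        apply hiS
        rw [hco, if_pos h1, h1, Φ.coeff_one', sub_self]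
      · rw [if_neg h1, sub_zero] at hco
        have hPi : P.coeff i ≠ 0 := by rw [← hco]; exact hiS
        obtain ⟨k, hk⟩ := Φ.supp_q_pow' a i hPi
        have h0 : i ≠ 0 := by
          intro h
          apply hPi
          rw [h, Φ.coeff_zero']
        have hk1 : 1 ≤ k := by
          by_contra hkk
          apply h1
          interval_cases k
          · simpa using hk
        have hqi : q ≤ i := by
          rw [hk]
          calc q = q ^ 1 := (pow_one q).symm
          _ ≤ q ^ k := Nat.pow_le_pow_right (by omega) hk1
        rw [map_mul, map_pow]
        calc v (R.coeff i) * v x ^ i ≤ 1 * v x ^ i := by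
              refine mul_le_mul_of_nonneg_right ?_ (pow_nonneg (v.nonneg x) i)
              rw [hco]; exact hgood a i
        _ = v x ^ i := one_mul _
        _ ≤ v x ^ q := pow_le_pow_of_le_one (v.nonneg x) hx hqi
  -- torsion is stable under the module action
  have tor_map : ∀ (b : Polynomial Fq) (x : K), Tor x → Tor ((Φ.toFun b).eval x) := by
    rintro b x ⟨Q, hQ, hx⟩
    refine ⟨Q, hQ, ?_⟩
    rw [← Polynomial.eval_comp, ← Φ.map_mul', mul_comm, Φ.map_mul', Polynomial.eval_comp,
      hx, ← Polynomial.coeff_zero_eq_eval_zero, Φ.coeff_zero']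
  -- Lemma A: no nonzero torsion deep in the formal group
  have lemA : ∀ b : Polynomial Fq, b ≠ 0 → v (Φ.alg b) < 1 →
      ∀ w : K, Tor w → v w ^ q < v (Φ.alg b) * v w → False := by
    rintro b hb hb1 w ⟨Q, hQ, hw⟩ hreg
    have hβ0 : 0 < v (Φ.alg b) := valg_pos b hb
    have hβ1 : v (Φ.alg b) ≤ 1 := valg_le b
    have hw0 : 0 < v w := by
      rcases (v.nonneg w).lt_or_eq with h | h
      · exact h
      · exfalso
        rw [← h, mul_zero] at hreg
        exact absurd hreg (pow_nonneg (le_refl (0:ℝ)) q).not_gt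
    set y : ℕ → K := fun k => (Φ.toFun (b ^ k)).eval w with hy
    have hrec : ∀ k, y (k + 1) = (Φ.toFun b).eval (y k) := by
      intro k
      show (Φ.toFun (b ^ (k + 1))).eval w = _
      rw [pow_succ', Φ.map_mul', Polynomial.eval_comp]
    have main : ∀ k, v (y k) = v (Φ.alg b) ^ k * v w ∧ v (y k) ^ q < v (Φ.alg b) * v (y k) := by
      intro k
      induction k with
      | zero =>
        have h0 : y 0 = w := by
          show (Φ.toFun (b ^ 0)).eval w = w
          rw [pow_zero, Φ.map_one', Polynomial.eval_X]
        constructor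
        · rw [h0, pow_zero, one_mul]
        · rw [h0]; exact hreg
      | succ k ih =>
        obtain ⟨hvk, hregk⟩ := ih
        have hvklt : v (y k) ^ q < v (y k) :=
          lt_of_lt_of_le hregk (mul_le_of_le_one_left (v.nonneg _) hβ1)
        have hyk0 : 0 < v (y k) := lt_of_le_of_lt (pow_nonneg (v.nonneg _) q) hvklt
        have hvk1 : v (y k) ≤ 1 := by
          by_contra hle
          push_neg at hle
          have : v (y k) ≤ v (y k) ^ q := le_self_pow₀ hle.le (by omega)
          exact absurd (lt_of_le_of_lt this hvklt) (lt_irrefl _)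
        obtain ⟨r, he, hr⟩ := key b (y k) hvk1
        have hdom : v r < v (Φ.alg b * y k) := by
          rw [map_mul]; exact lt_of_le_of_lt hr hregk
        have hv1 : v (y (k + 1)) = v (Φ.alg b) * v (y k) := by
          rw [hrec k, he, na_add_eq v hna hdom, map_mul]
        constructor
        · rw [hv1, hvk, pow_succ]; ring
        · rw [hv1, mul_pow]
          calc v (Φ.alg b) ^ q * v (y k) ^ q < v (Φ.alg b) ^ q * (v (Φ.alg b) * v (y k)) :=
                mul_lt_mul_of_pos_left hregk (pow_pos hβ0 q)
          _ ≤ v (Φ.alg b) * (v (Φ.alg b) * v (y k)) := by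
                refine mul_le_mul_of_nonneg_right ?_ (by positivity)
                exact pow_le_of_le_one hβ0.le hβ1 (by omega)
          _ = v (Φ.alg b) * (v (Φ.alg b) * v (y k)) := rfl
    -- the values v (y k) are strictly decreasing, so the y k are pairwise distinct
    have hinj : Function.Injective y := by
      have hanti : StrictAnti fun k => v (y k) := by
        intro i j hij
        simp only
        rw [(main i).1, (main j).1]
        exact mul_lt_mul_of_pos_right (pow_lt_pow_right_of_lt_one₀ hβ0 hb1 hij) hw0
      intro i j hij
      by_contra hne
      rcases lt_or_gt_of_ne hne with h | h
      · exact absurd (congrArg v hij) (hanti h).ne'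
      · exact absurd (congrArg v hij) (hanti h).ne
    have hmem : ∀ k, y k ∈ {x : K | (Φ.toFun Q).IsRoot x} := by
      intro k
      show (Φ.toFun Q).eval (y k) = 0
      rw [hy]
      simp only
      rw [← Polynomial.eval_comp, ← Φ.map_mul', mul_comm, Φ.map_mul', Polynomial.eval_comp,
        hw, ← Polynomial.coeff_zero_eq_eval_zero, Φ.coeff_zero']
    exact (Set.infinite_of_injective_forall_mem hinj hmem)
      (Polynomial.finite_setOf_isRoot (hΦne Q hQ))
  -- the set of small torsion points is finite
  have Tfin : {w : K | Tor w ∧ v w < s}.Finite := by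
    by_cases hcase : ∃ b : Polynomial Fq, b ≠ 0 ∧ v (Φ.alg b) < 1
    · obtain ⟨b, hb, hb1⟩ := hcase
      have hβ0 : 0 < v (Φ.alg b) := valg_pos b hb
      set c := max (v (Φ.alg b)) (s ^ (q - 1)) with hc
      have hc0 : 0 < c := lt_of_lt_of_le hβ0 (le_max_left _ _)
      have hc1 : c < 1 := max_lt hb1 (pow_lt_one₀ hs0.le hs1 (by omega))
      obtain ⟨N, hN⟩ := exists_pow_lt_of_lt_one hβ0 hc1
      refine Set.Finite.subset (Polynomial.finite_setOf_isRoot (hΦne (b ^ N) (pow_ne_zero _ hb))) ?_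
      rintro w ⟨hwT, hws⟩
      have hstep : ∀ x : K, v x < s → v ((Φ.toFun b).eval x) ≤ c * v x := by
        intro x hx
        obtain ⟨r, he, hr⟩ := key b x (le_of_lt (hx.trans hs1))
        rw [he]
        refine le_trans (hna _ _) (max_le ?_ ?_)
        · rw [map_mul]
          exact mul_le_mul_of_nonneg_right (le_max_left _ _) (v.nonneg x)
        · refine hr.trans ?_
          have hxq : v x ^ q = v x ^ (q - 1) * v x := by
            rw [← pow_succ]
            congr 1
            omega
          rw [hxq]
          refine mul_le_mul_of_nonneg_right ?_ (v.nonneg x)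
          exact le_trans (pow_le_pow_left₀ (v.nonneg x) hx.le _) (le_max_right _ _)
      have hiter : ∀ k, v ((Φ.toFun (b ^ k)).eval w) ≤ c ^ k * v w := by
        intro k
        induction k with
        | zero =>
          rw [pow_zero, Φ.map_one', Polynomial.eval_X, pow_zero, one_mul]
        | succ k ih =>
          have hks : v ((Φ.toFun (b ^ k)).eval w) < s := by
            refine lt_of_le_of_lt ih (lt_of_le_of_lt ?_ hws)
            calc c ^ k * v w ≤ 1 * v w :=
              mul_le_mul_of_nonneg_right (pow_le_one₀ hc0.le hc1.le) (v.nonneg w)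
            _ = v w := one_mul _
          calc v ((Φ.toFun (b ^ (k + 1))).eval w)
              = v ((Φ.toFun b).eval ((Φ.toFun (b ^ k)).eval w)) := by
                rw [pow_succ', Φ.map_mul', Polynomial.eval_comp]
          _ ≤ c * v ((Φ.toFun (b ^ k)).eval w) := hstep _ hks
          _ ≤ c * (c ^ k * v w) := mul_le_mul_of_nonneg_left ih hc0.le
          _ = c ^ (k + 1) * v w := by ring
      -- the N-th iterate must vanish
      show (Φ.toFun (b ^ N)).eval w = 0
      by_contra hu
      set u := (Φ.toFun (b ^ N)).eval w with hudef
      have huT : Tor u := tor_map (b ^ N) w hwT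
      have hu0 : 0 < v u := v.pos hu
      have huc : v u < v (Φ.alg b) := by
        refine lt_of_le_of_lt (hiter N) (lt_of_le_of_lt ?_ hN)
        calc c ^ N * v w ≤ c ^ N * 1 :=
          mul_le_mul_of_nonneg_left (le_of_lt (hws.trans hs1)) (pow_nonneg hc0.le N)
        _ = c ^ N := mul_one _
      have hureg : v u ^ q < v (Φ.alg b) * v u := by
        have h1 : v u ^ q = v u ^ (q - 1) * v u := by
          rw [← pow_succ]; congr 1; omega
        rw [h1]
        refine mul_lt_mul_of_pos_right (lt_of_le_of_lt ?_ huc) hu0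
        exact pow_le_of_le_one (v.nonneg u) (le_of_lt (lt_of_lt_of_le huc (valg_le b))) (by omega)
      exact lemA b hb hb1 u huT hureg
    · push_neg at hcase
      refine Set.Finite.subset (Set.finite_singleton (0 : K)) ?_
      rintro w ⟨⟨Q, hQ, hw⟩, hws⟩
      simp only [Set.mem_singleton_iff]
      by_contra hw0
      have hv0 : 0 < v w := v.pos hw0
      have hv1 : v w < 1 := hws.trans hs1
      have hvQ : v (Φ.alg Q) = 1 := le_antisymm (valg_le Q) (hcase Q hQ)
      obtain ⟨r, he, hr⟩ := key Q w hv1.le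
      have hwq : v w ^ q < v w := by
        calc v w ^ q < v w ^ 1 := pow_lt_pow_right_of_lt_one₀ hv0 hv1 (by omega)
        _ = v w := pow_one _
      have hdom : v r < v (Φ.alg Q * w) := by
        rw [map_mul, hvQ, one_mul]
        exact lt_of_le_of_lt hr hwq
      have : v ((Φ.toFun Q).eval w) = v (Φ.alg Q * w) := by
        rw [he]; exact na_add_eq v hna hdom
      rw [hw, map_zero, map_mul, hvQ, one_mul] at this
      exact absurd this.symm hv0.ne'
  -- translate: the set in question injects into the small torsion set
  rcases Set.eq_empty_or_nonempty
      {x : K | (∃ Q : Polynomial Fq, Q ≠ 0 ∧ (Φ.toFun Q).eval x = 0) ∧ v (z - x) < s} with h | h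
  · rw [h]; exact Set.finite_empty
  · obtain ⟨x₀, hx₀T, hx₀s⟩ := h
    refine Set.Finite.subset (Tfin.image fun w => x₀ + w) ?_
    rintro x ⟨hxT, hxs⟩
    refine ⟨x - x₀, ⟨?_, ?_⟩, by ring⟩
    · obtain ⟨Q, hQ, hQx⟩ := hxT
      obtain ⟨Q₀, hQ₀, hQx₀⟩ := hx₀T
      refine ⟨Q * Q₀, mul_ne_zero hQ hQ₀, ?_⟩
      rw [hsub]
      have e1 : (Φ.toFun (Q * Q₀)).eval x = 0 := by
        rw [mul_comm, Φ.map_mul', Polynomial.eval_comp, hQx,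
          ← Polynomial.coeff_zero_eq_eval_zero, Φ.coeff_zero']
      have e2 : (Φ.toFun (Q * Q₀)).eval x₀ = 0 := by
        rw [Φ.map_mul', Polynomial.eval_comp, hQx₀,
          ← Polynomial.coeff_zero_eq_eval_zero, Φ.coeff_zero']
      rw [e1, e2, sub_zero]
    · have hrw : x - x₀ = (z - x₀) + (-(z - x)) := by ring
      rw [hrw]
      refine lt_of_le_of_lt (hna _ _) (max_lt hx₀s ?_)
      rwa [v.map_neg]
end

section
/- Let Φ be a Drinfeld module of generic characteristic over K with canonical height ĥ_Φ, and suppose there is a constant C > 0 with |h(z) − ĥ_Φ(z)| ≤ C for all z ∈ K̄, where h is the Weil height. Let β ∈ K with ĥ_Φ(β) > 0 (β nontorsion). For each n ≥ 1 let x_n ∈ K^sep satisfy Φ_{t^n}(x_n) · (x_n − β) = 1. Then ĥ_Φ(x_n) ≤ (h(β) + 2C + O(1))/q^{rn}, and in particular ĥ_Φ(x_n) → 0 as n → ∞. -/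
/-- Let `Φ` be a Drinfeld module of rank `r` over `K` with canonical height
`ĥ_Φ` satisfying `|h − ĥ_Φ| ≤ C` and `ĥ_Φ(Φ_{t^n}(z)) = q^{rn}·ĥ_Φ(z)`, where the Weil
height `h` satisfies `h(1/w) = h(w)` and `h(w − β) ≤ h(w) + h(β) + O(1)`. Let `β` be
nontorsion (`ĥ_Φ(β) > 0`) and for each `n ≥ 1` let `x_n` satisfy
`Φ_{t^n}(x_n)·(x_n − β) = 1`. Then `ĥ_Φ(x_n) ≤ (h(β) + 2C + O(1))/q^{rn}`, and in
particular `ĥ_Φ(x_n) → 0`. -/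
theorem stmt_12 (Fq K : Type*) [Field Fq] [Fintype Fq] [Field K]
    (Φ : DrinfeldModuleData Fq K) (r : ℕ) (hr : 1 ≤ r)
    (h hhat : K → ℝ) (hhat_nonneg : ∀ z, 0 ≤ hhat z)
    (C : ℝ) (hC : 0 < C) (hclose : ∀ z : K, |h z - hhat z| ≤ C)
    (hfunc : ∀ (z : K) (n : ℕ),
      hhat ((Φ.toFun (Polynomial.X ^ n)).eval z) = (Fintype.card Fq : ℝ) ^ (r * n) * hhat z)
    (hinv : ∀ w : K, w ≠ 0 → h w⁻¹ = h w)
    (β : K) (hβ : 0 < hhat β)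
    (C' : ℝ) (hC' : 0 ≤ C') (hsub : ∀ w : K, h (w - β) ≤ h w + h β + C')
    (x : ℕ → K)
    (hx : ∀ n : ℕ, 1 ≤ n → (Φ.toFun (Polynomial.X ^ n)).eval (x n) * (x n - β) = 1) :
    (∃ C'' : ℝ, 0 ≤ C'' ∧ ∀ n : ℕ, 1 ≤ n →
        hhat (x n) ≤ (h β + 2 * C + C'') / (Fintype.card Fq : ℝ) ^ (r * n)) ∧
      Filter.Tendsto (fun n => hhat (x n)) Filter.atTop (nhds 0) := by

  -- abbreviations
  have hq2 : (2:ℝ) ≤ (Fintype.card Fq : ℝ) := by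
    have := Fintype.one_lt_card (α := Fq)
    exact_mod_cast this
  have hq1 : (1:ℝ) < (Fintype.card Fq : ℝ) := lt_of_lt_of_le one_lt_two hq2
  set q : ℝ := (Fintype.card Fq : ℝ) with hqdef
  have hβh : 0 < h β + C := by
    have := hclose β
    have := abs_le.mp this
    linarith [this.1]
  have hA : 0 < h β + 2 * C + C' := by linarith
  have key : ∀ n : ℕ, 1 ≤ n →
      hhat (x n) * q ^ (r * n) ≤ hhat (x n) + (h β + 2 * C + C') := by
    intro n hn
    set y := (Φ.toFun (Polynomial.X ^ n)).eval (x n) with hy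
    have hxn := hx n hn
    have hy0 : y ≠ 0 := by
      intro h0; rw [← hy, h0, zero_mul] at hxn; exact zero_ne_one hxn
    have hinveq : y⁻¹ = x n - β := inv_eq_of_mul_eq_one_right hxn
    have h1 : hhat y = q ^ (r * n) * hhat (x n) := hfunc (x n) n
    have h2 : hhat y ≤ h y + C := by
      have := abs_le.mp (hclose y); linarith [this.1]
    have h3 : h y = h (x n - β) := by rw [← hinveq, hinv y hy0]
    have h4 : h (x n - β) ≤ h (x n) + h β + C' := hsub (x n)
    have h5 : h (x n) ≤ hhat (x n) + C := by
      have := abs_le.mp (hclose (x n)); linarith [this.2]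
    nlinarith [h1, h2, h3, h4, h5]
  have hqpow : ∀ n : ℕ, 1 ≤ n → (2:ℝ) ≤ q ^ (r * n) := by
    intro n hn
    calc (2:ℝ) ≤ q := hq2
    _ = q ^ 1 := (pow_one q).symm
    _ ≤ q ^ (r * n) := by
        apply pow_le_pow_right₀ (le_of_lt (lt_of_lt_of_le one_lt_two hq2))
        exact Nat.one_le_iff_ne_zero.mpr (by positivity)
  -- choose C''
  refine ⟨⟨h β + 2 * C + 2 * C', by linarith, ?_⟩, ?_⟩
  · intro n hn
    have hk := key n hn
    have h2q := hqpow n hn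
    have hpos : (0:ℝ) < q ^ (r * n) := by linarith
    rw [le_div_iff₀ hpos]
    -- hhat(x n) * (q^(rn) - 1) ≤ A, so hhat(x n) ≤ A since q^(rn)-1 ≥ 1
    have hA1 : hhat (x n) ≤ h β + 2 * C + C' := by
      nlinarith [hhat_nonneg (x n)]
    nlinarith [hhat_nonneg (x n)]
  · -- tendsto
    have htend : Filter.Tendsto (fun n : ℕ => 2 * (h β + 2 * C + C') / q ^ (r * n))
        Filter.atTop (nhds 0) := by
      have h1 : Filter.Tendsto (fun n : ℕ => q ^ (r * n)) Filter.atTop Filter.atTop := by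
        have : (fun n : ℕ => q ^ (r * n)) = fun n : ℕ => (q ^ r) ^ n := by
          funext n; rw [← pow_mul]
        rw [this]
        apply tendsto_pow_atTop_atTop_of_one_lt
        calc (1:ℝ) = 1 ^ r := (one_pow r).symm
        _ < q ^ r := by
            apply pow_lt_pow_left₀ hq1 zero_le_one
            omega
      simpa [div_eq_mul_inv] using h1.inv_tendsto_atTop.const_mul (2 * (h β + 2 * C + C'))
    apply squeeze_zero' (Filter.Eventually.of_forall fun n => hhat_nonneg (x n))
      ?_ htend
    filter_upwards [Filter.eventually_ge_atTop 1] with n hn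
    have hk := key n hn
    have h2q := hqpow n hn
    have hpos : (0:ℝ) < q ^ (r * n) := by linarith
    rw [le_div_iff₀ hpos]
    have hA1 : hhat (x n) ≤ h β + 2 * C + C' := by
      nlinarith [hhat_nonneg (x n)]
    nlinarith [hhat_nonneg (x n)]
end

section
/- Let Φ be the Carlitz module Φ_t(x) = tx + x^p over F_p(t), let n ≥ 1, and let x ∈ F_p(t)^sep satisfy Φ_{t^n}(x)·(x − 1) = 1. Then for every finite place v of F_p(t) (i.e., v ≠ v_∞) and every Galois conjugate x^σ of x: |x^σ|_v ≤ 1 and |x^σ − 1|_v = 1. In particular x is {v_∞}-integral with respect to 1. -/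
/-- Let `Φ_t(y) = T·y + y^p` be the Carlitz module (with `T` the image of
`t`), let `v` be a finite place (so `|T|_v ≤ 1`), let `n ≥ 1`, and let `x` satisfy
`Φ_{t^n}(x)·(x − 1) = 1`. Then `|x|_v ≤ 1` and `|x − 1|_v = 1`. (Applied to each Galois
conjugate `x^σ`—which satisfies the same equation—this says `x` is `{v_∞}`-integral with
respect to `1`.) -/
theorem stmt_14 (p : ℕ) (hp : p.Prime) (L : Type*) [Field L]
    (v : AbsoluteValue L ℝ)
    (hna : ∀ x y : L, v (x + y) ≤ max (v x) (v y))
    (T : L) (hT : v T ≤ 1)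
    (Φ : ℕ → L → L)
    (hΦ0 : ∀ x : L, Φ 0 x = x)
    (hΦs : ∀ (n : ℕ) (x : L), Φ (n + 1) x = T * Φ n x + (Φ n x) ^ p)
    (n : ℕ) (hn : 1 ≤ n) (x : L) (hx : Φ n x * (x - 1) = 1) :
    v x ≤ 1 ∧ v (x - 1) = 1 := by
  have hp2 : 2 ≤ p := hp.two_le
  -- ultrametric equality lower bound: if v a < v b then v b ≤ v (a + b)
  have hdom : ∀ a b : L, v a < v b → v b ≤ v (a + b) := by
    intro a b hab
    by_contra h
    push_neg at h
    have : v b = v (a + b + (-a)) := by ring_nf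
    have h2 := hna (a + b) (-a)
    rw [v.map_neg] at h2
    rw [← this] at h2
    rcases max_cases (v (a + b)) (v a) with ⟨he, _⟩ | ⟨he, _⟩ <;> rw [he] at h2 <;> linarith
  -- if v x > 1 then v (Φ m x) > 1 for all m
  have key : 1 < v x → ∀ m, 1 < v (Φ m x) := by
    intro hvx m
    induction m with
    | zero => rw [hΦ0]; exact hvx
    | succ k ih =>
      rw [hΦs]
      have h1 : v (T * Φ k x) ≤ v (Φ k x) := by
        rw [v.map_mul]
        nlinarith [v.nonneg (Φ k x)]
      have h2 : v (Φ k x) < v ((Φ k x) ^ p) := by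
        rw [v.map_pow]
        calc v (Φ k x) = v (Φ k x) ^ 1 := (pow_one _).symm
          _ < v (Φ k x) ^ p := pow_lt_pow_right₀ ih (by omega)
      have := hdom (T * Φ k x) ((Φ k x) ^ p) (lt_of_le_of_lt h1 h2)
      linarith
  have hvx : v x ≤ 1 := by
    by_contra h
    push_neg at h
    have h1 := key h n
    have h2 : v x ≤ v (x - 1) := by
      have : v (-1 : L) < v x := by rw [v.map_neg, v.map_one]; exact h
      have := hdom (-1) x this
      calc v x ≤ v (-1 + x) := this
        _ = v (x - 1) := by ring_nf
    have h3 : v (Φ n x * (x - 1)) = 1 := by rw [hx, v.map_one]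
    rw [v.map_mul] at h3
    nlinarith
  -- v (Φ m x) ≤ 1
  have hΦle : ∀ m, v (Φ m x) ≤ 1 := by
    intro m
    induction m with
    | zero => rw [hΦ0]; exact hvx
    | succ k ih =>
      rw [hΦs]
      refine le_trans (hna _ _) (max_le ?_ ?_)
      · rw [v.map_mul]; nlinarith [v.nonneg (Φ k x)]
      · rw [v.map_pow]; exact pow_le_one₀ (v.nonneg _) ih
  have hx1 : v (x - 1) ≤ 1 := by
    have : v (x - 1) = v (x + (-1)) := by ring_nf
    rw [this]
    refine le_trans (hna _ _) (max_le hvx ?_)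
    rw [v.map_neg, v.map_one]
  have h3 : v (Φ n x) * v (x - 1) = 1 := by rw [← v.map_mul, hx, v.map_one]
  have := hΦle n
  constructor
  · exact hvx
  · nlinarith [v.nonneg (x - 1)]
end

section
/- Let Φ be a Drinfeld module over K in normal form with good reduction at all finite places, let v be a finite place of K, let β ∈ K with |β|_v = 1, and let (γ_n) be an infinite sequence of distinct torsion points of Φ. Then lim_{n→∞} (1/[K(γ_n):K]) Σ_{σ} log|β − γ_n^σ|_v = 0, where the sum runs over the embeddings σ : K(γ_n) → K^sep. -/
set_option linter.unusedSectionVars false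

namespace Stmt16

open Polynomial

variable {Fq K L : Type*} [Field Fq] [Fintype Fq] [Field K] [Field L] [Algebra K L]

/-- The image of `Φ_a` in `L[X]`. -/
noncomputable def dm (Φ : DrinfeldModuleData Fq K) (a : Polynomial Fq) : Polynomial L :=
  (Φ.toFun a).map (algebraMap K L)

/-- Evaluation of `Φ_a` at a point of `L`. -/
noncomputable def ev (Φ : DrinfeldModuleData Fq K) (a : Polynomial Fq) (x : L) : L :=
  (dm Φ a (L := L)).eval x

/-- Torsion points. -/
def IsTor (Φ : DrinfeldModuleData Fq K) (x : L) : Prop :=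
  ∃ Q : Polynomial Fq, Q ≠ 0 ∧ ev Φ Q x = 0

variable (Φ : DrinfeldModuleData Fq K)

lemma toFun_ne_zero {a : Polynomial Fq} (ha : a ≠ 0) : Φ.toFun a ≠ 0 := by
  intro h
  have := Φ.degree_pos' a ha
  rw [h] at this
  simp at this

lemma dm_coeff (a : Polynomial Fq) (i : ℕ) :
    (dm Φ a (L := L)).coeff i = algebraMap K L ((Φ.toFun a).coeff i) := coeff_map _ _

lemma dm_coeff_zero (a : Polynomial Fq) : (dm Φ a (L := L)).coeff 0 = 0 := by
  rw [dm_coeff, Φ.coeff_zero', map_zero]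

lemma dm_natDegree (a : Polynomial Fq) :
    (dm Φ a (L := L)).natDegree = (Φ.toFun a).natDegree := natDegree_map _

lemma dm_ne_zero {a : Polynomial Fq} (ha : a ≠ 0) : dm Φ a (L := L) ≠ 0 :=
  (Polynomial.map_ne_zero_iff (algebraMap K L).injective).mpr (toFun_ne_zero Φ ha)

lemma ev_zero (a : Polynomial Fq) : ev Φ a (0 : L) = 0 := by
  rw [ev, ← coeff_zero_eq_eval_zero, dm_coeff_zero]

lemma ev_mul (a b : Polynomial Fq) (x : L) : ev Φ (a * b) x = ev Φ a (ev Φ b x) := by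
  rw [ev, ev, ev, dm, Φ.map_mul', Polynomial.map_comp, eval_comp]
  rfl

lemma ev_one (x : L) : ev Φ 1 x = x := by
  rw [ev, dm, Φ.map_one', Polynomial.map_X, eval_X]

/-- characteristic of `L` is that of `Fq`. -/
lemma charL (Φ : DrinfeldModuleData Fq K) (L : Type*) [Field L] [Algebra K L] :
    CharP L (ringChar Fq) := by
  have hinj : Function.Injective ((algebraMap K L).comp (Φ.alg.comp Polynomial.C)) := by
    simp only [RingHom.coe_comp]
    exact (algebraMap K L).injective.comp (Φ.alg_injective'.comp Polynomial.C_injective)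
  exact charP_of_injective_ringHom hinj (ringChar Fq)

lemma ev_add (a : Polynomial Fq) (x y : L) : ev Φ a (x + y) = ev Φ a x + ev Φ a y := by
  haveI := charL Φ L
  haveI : Fact (ringChar Fq).Prime := ⟨CharP.char_is_prime Fq (ringChar Fq)⟩
  obtain ⟨m, hp, hcard⟩ := FiniteField.card Fq (ringChar Fq)
  rw [ev, ev, ev, eval_eq_sum, eval_eq_sum, eval_eq_sum, Polynomial.sum_def,
    Polynomial.sum_def, Polynomial.sum_def, ← Finset.sum_add_distrib]
  apply Finset.sum_congr rfl
  intro i hi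
  have hco : (Φ.toFun a).coeff i ≠ 0 := by
    have h1 := Polynomial.mem_support_iff.mp hi
    rw [dm_coeff] at h1
    intro h; exact h1 (by rw [h, map_zero])
  obtain ⟨k, hk⟩ := Φ.supp_q_pow' a i hco
  rw [hk, hcard, ← pow_mul, add_pow_char_pow, mul_add]

lemma ev_sub (a : Polynomial Fq) (x y : L) : ev Φ a (x - y) = ev Φ a x - ev Φ a y := by
  have h := ev_add Φ a (x - y) y
  rw [sub_add_cancel] at h
  rw [h]; ring

lemma isTor_sub {x y : L} (hx : IsTor Φ x) (hy : IsTor Φ y) : IsTor Φ (x - y) := by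
  obtain ⟨Q, hQ, hQx⟩ := hx
  obtain ⟨Q', hQ', hQy⟩ := hy
  refine ⟨Q' * Q, mul_ne_zero hQ' hQ, ?_⟩
  rw [ev_mul, ev_sub, hQx, zero_sub, show (-(ev Φ Q y)) = 0 - ev Φ Q y from (zero_sub _).symm,
    ev_sub, ev_zero, zero_sub, neg_eq_zero, ← ev_mul, mul_comm, ev_mul, hQy, ev_zero]


section Val

variable (v : AbsoluteValue L ℝ)

lemma na_sub (hna : ∀ x y : L, v (x + y) ≤ max (v x) (v y)) (x y : L) :
    v (x - y) ≤ max (v x) (v y) := by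
  rw [sub_eq_add_neg]
  simpa [v.map_neg] using hna x (-y)

lemma na_sum (hna : ∀ x y : L, v (x + y) ≤ max (v x) (v y)) {ι : Type*} (s : Finset ι)
    (g : ι → L) {B : ℝ} (hB : 0 ≤ B) (h : ∀ i ∈ s, v (g i) ≤ B) :
    v (∑ i ∈ s, g i) ≤ B := by
  classical
  induction s using Finset.cons_induction with
  | empty => simpa using hB
  | cons a s ha ih =>
    rw [Finset.sum_cons]
    exact le_trans (hna _ _) (max_le (h a (Finset.mem_cons_self _ _))
      (ih fun i hi => h i (Finset.mem_cons_of_mem hi)))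

variable (hna : ∀ x y : L, v (x + y) ≤ max (v x) (v y))
variable (hgood : ∀ (a : Polynomial Fq) (i : ℕ), v (algebraMap K L ((Φ.toFun a).coeff i)) ≤ 1)

lemma alg_ne_zero {Q : Polynomial Fq} (hQ : Q ≠ 0) : Φ.alg Q ≠ 0 :=
  fun h => hQ (Φ.alg_injective' (by rw [h, map_zero]))

include hna hgood

lemma root_lower {Q : Polynomial Fq} (hQ : Q ≠ 0) {x : L} (hx0 : x ≠ 0) (hx1 : v x ≤ 1)
    (hroot : ev Φ Q x = 0) : v (algebraMap K L (Φ.alg Q)) ≤ v x := by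
  classical
  set f := dm Φ Q (L := L) with hf
  have h1mem : (1 : ℕ) ∈ f.support := by
    rw [mem_support_iff, hf, dm_coeff, Φ.coeff_one']
    intro h
    exact alg_ne_zero Φ hQ ((_root_.map_eq_zero _).mp h)
  have heval : (∑ i ∈ f.support.erase 1, f.coeff i * x ^ i) + f.coeff 1 * x ^ 1 = 0 := by
    rw [Finset.sum_erase_add _ _ h1mem]
    rw [ev, eval_eq_sum, Polynomial.sum_def] at hroot
    exact hroot
  have hkey : v (f.coeff 1 * x ^ 1) = v (∑ i ∈ f.support.erase 1, f.coeff i * x ^ i) := by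
    rw [eq_neg_of_add_eq_zero_right heval, v.map_neg]
  have hrest : v (∑ i ∈ f.support.erase 1, f.coeff i * x ^ i) ≤ v x * v x := by
    apply na_sum v hna _ _ (mul_nonneg (v.nonneg x) (v.nonneg x))
    intro i hi
    obtain ⟨hne1, hisup⟩ := Finset.mem_erase.mp hi
    have h2le : 2 ≤ i := by
      rcases i with _ | _ | i
      · exact absurd (by rw [hf, dm_coeff_zero]) (mem_support_iff.mp hisup)
      · exact absurd rfl hne1
      · omega
    calc v (f.coeff i * x ^ i) = v (f.coeff i) * v x ^ i := by rw [v.map_mul, v.map_pow]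
      _ ≤ 1 * v x ^ i := by
          have : v (f.coeff i) ≤ 1 := by rw [hf, dm_coeff]; exact hgood Q i
          gcongr
      _ = v x ^ i := one_mul _
      _ ≤ v x ^ 2 := pow_le_pow_of_le_one (v.nonneg x) hx1 h2le
      _ = v x * v x := by ring
  have h5 : v (f.coeff 1) * v x ≤ v x * v x := by
    have : v (f.coeff 1 * x ^ 1) = v (f.coeff 1) * v x := by rw [v.map_mul, pow_one]
    rw [← this, hkey]; exact hrest
  have h6 : v (f.coeff 1) ≤ v x := le_of_mul_le_mul_right h5 (v.pos hx0)
  rw [hf, dm_coeff, Φ.coeff_one'] at h6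
  exact h6

lemma tor_le_one (hmonic : ∀ a : Polynomial Fq, a ≠ 0 →
      v (algebraMap K L ((Φ.toFun a).leadingCoeff)) = 1)
    {x : L} (hx : IsTor Φ x) : v x ≤ 1 := by
  classical
  by_contra hgt
  push_neg at hgt
  obtain ⟨Q, hQ, hroot⟩ := hx
  set f := dm Φ Q (L := L) with hf
  set d := f.natDegree with hd
  have hdpos : 0 < d := by rw [hd, hf, dm_natDegree]; exact Φ.degree_pos' Q hQ
  have hlead : v (f.coeff d) = 1 := by
    rw [hd, hf, dm_natDegree, dm_coeff]
    exact hmonic Q hQ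
  have hdmem : d ∈ f.support := by
    rw [mem_support_iff]
    intro h
    rw [h] at hlead
    simp at hlead
  have heval : (∑ i ∈ f.support.erase d, f.coeff i * x ^ i) + f.coeff d * x ^ d = 0 := by
    rw [Finset.sum_erase_add _ _ hdmem]
    rw [ev, eval_eq_sum, Polynomial.sum_def] at hroot
    exact hroot
  have hkey : v (f.coeff d * x ^ d) = v (∑ i ∈ f.support.erase d, f.coeff i * x ^ i) := by
    rw [eq_neg_of_add_eq_zero_right heval, v.map_neg]
  have hx0 : (0:ℝ) ≤ v x := v.nonneg x
  have hrest : v (∑ i ∈ f.support.erase d, f.coeff i * x ^ i) ≤ v x ^ (d - 1) := by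
    apply na_sum v hna _ _ (pow_nonneg hx0 _)
    intro i hi
    obtain ⟨hnei, hisup⟩ := Finset.mem_erase.mp hi
    have hile : i ≤ d - 1 := by
      have := Polynomial.le_natDegree_of_ne_zero (mem_support_iff.mp hisup)
      omega
    calc v (f.coeff i * x ^ i) = v (f.coeff i) * v x ^ i := by rw [v.map_mul, v.map_pow]
      _ ≤ 1 * v x ^ i := by
          have : v (f.coeff i) ≤ 1 := by rw [hf, dm_coeff]; exact hgood Q i
          gcongr
      _ = v x ^ i := one_mul _
      _ ≤ v x ^ (d - 1) := pow_le_pow_right₀ (le_of_lt hgt) hile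
  have hbig : v (f.coeff d * x ^ d) = v x ^ d := by
    rw [v.map_mul, v.map_pow, hlead, one_mul]
  have hlt : v x ^ (d - 1) < v x ^ d := pow_lt_pow_right₀ hgt (by omega)
  rw [hbig] at hkey
  rw [hkey] at hlt
  exact absurd hrest (not_le.mpr hlt)

lemma ev_le (a : Polynomial Fq) {x : L} (hx : v x ≤ 1) : v (ev Φ a x) ≤ v x := by
  classical
  rw [ev, eval_eq_sum, Polynomial.sum_def]
  apply na_sum v hna _ _ (v.nonneg x)
  intro i hi
  have h1le : 1 ≤ i := by
    rcases i with _ | i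
    · exact absurd (dm_coeff_zero Φ a) (mem_support_iff.mp hi)
    · omega
  calc v ((dm Φ a).coeff i * x ^ i) = v ((dm Φ a (L := L)).coeff i) * v x ^ i := by
        rw [v.map_mul, v.map_pow]
    _ ≤ 1 * v x ^ i := by
        have : v ((dm Φ a (L := L)).coeff i) ≤ 1 := by rw [dm_coeff]; exact hgood a i
        gcongr
    _ = v x ^ i := one_mul _
    _ ≤ v x ^ 1 := pow_le_pow_of_le_one (v.nonneg x) hx h1le
    _ = v x := pow_one _

lemma ev_contract (a : Polynomial Fq) {x : L} {s : ℝ} (hxs : v x ≤ s) (hs1 : s ≤ 1) :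
    v (ev Φ a x) ≤ v x * max (v (algebraMap K L (Φ.alg a))) s := by
  classical
  have hvx0 : (0:ℝ) ≤ v x := v.nonneg x
  have hs0 : (0:ℝ) ≤ s := le_trans hvx0 hxs
  have hmax0 : (0:ℝ) ≤ max (v (algebraMap K L (Φ.alg a))) s := le_trans hs0 (le_max_right _ _)
  rw [ev, eval_eq_sum, Polynomial.sum_def]
  apply na_sum v hna _ _ (mul_nonneg hvx0 hmax0)
  intro i hi
  rcases i with _ | _ | i
  · exact absurd (dm_coeff_zero Φ a) (mem_support_iff.mp hi)
  · rw [dm_coeff, Φ.coeff_one', pow_one, v.map_mul, mul_comm]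
    exact mul_le_mul_of_nonneg_left (le_max_left _ _) hvx0
  · calc v ((dm Φ a).coeff (i+2) * x ^ (i+2))
        = v ((dm Φ a (L := L)).coeff (i+2)) * v x ^ (i + 2) := by rw [v.map_mul, v.map_pow]
      _ ≤ 1 * v x ^ (i+2) := by
          have : v ((dm Φ a (L := L)).coeff (i+2)) ≤ 1 := by rw [dm_coeff]; exact hgood a (i+2)
          gcongr
      _ = v x * v x ^ (i+1) := by ring
      _ ≤ v x * s ^ (i+1) := mul_le_mul_of_nonneg_left (pow_le_pow_left₀ hvx0 hxs _) hvx0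
      _ ≤ v x * s ^ 1 :=
          mul_le_mul_of_nonneg_left (pow_le_pow_of_le_one hs0 hs1 (by omega)) hvx0
      _ = v x * s := by rw [pow_one]
      _ ≤ v x * max (v (algebraMap K L (Φ.alg a))) s :=
          mul_le_mul_of_nonneg_left (le_max_right _ _) hvx0

lemma ev_pow_contract (P : Polynomial Fq) {s : ℝ} (hs1 : s ≤ 1) :
    ∀ (k : ℕ) (x : L), v x ≤ s →
      v (ev Φ (P ^ k) x) ≤ v x * (max (v (algebraMap K L (Φ.alg P))) s) ^ k := by
  intro k
  induction k with
  | zero => intro x hx; rw [pow_zero, ev_one, pow_zero, mul_one]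
  | succ k ih =>
    intro x hx
    set c := max (v (algebraMap K L (Φ.alg P))) s with hc
    have hvx0 : (0:ℝ) ≤ v x := v.nonneg x
    have hs0 : (0:ℝ) ≤ s := le_trans hvx0 hx
    have hc0 : (0:ℝ) ≤ c := le_trans hs0 (le_max_right _ _)
    have hP1 : v (algebraMap K L (Φ.alg P)) ≤ 1 := by
      have := hgood P 1
      rwa [Φ.coeff_one'] at this
    have hc1 : c ≤ 1 := max_le hP1 hs1
    rw [pow_succ, ev_mul]
    have h1 : v (ev Φ P x) ≤ v x * c := ev_contract Φ v hna hgood P hx hs1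
    have h2 : v (ev Φ P x) ≤ s := le_trans h1 (by nlinarith)
    calc v (ev Φ (P ^ k) (ev Φ P x)) ≤ v (ev Φ P x) * c ^ k := ih _ h2
      _ ≤ (v x * c) * c ^ k := mul_le_mul_of_nonneg_right h1 (pow_nonneg hc0 _)
      _ = v x * c ^ (k + 1) := by ring

lemma tor_killed (P : Polynomial Fq) (hP : P ≠ 0) {s : ℝ} (hs0 : 0 < s) (hs1 : s ≤ 1) (k₀ : ℕ)
    (hk₀ : s * (max (v (algebraMap K L (Φ.alg P))) s) ^ k₀ < v (algebraMap K L (Φ.alg P))) :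
    ∀ (k : ℕ) (x : L), v x ≤ s → ev Φ (P ^ k) x = 0 → ev Φ (P ^ k₀) x = 0 := by
  intro k
  induction k with
  | zero =>
    intro x hx h0
    rw [pow_zero, ev_one] at h0
    rw [h0, ev_zero]
  | succ k ih =>
    intro x hx hkill
    by_cases hle : k + 1 ≤ k₀
    · have hsplit : P ^ k₀ = P ^ (k₀ - (k + 1)) * P ^ (k + 1) := by
        rw [← pow_add]; congr 1; omega
      rw [hsplit, ev_mul, hkill, ev_zero]
    · have hkk : k₀ ≤ k := by omega
      set c := max (v (algebraMap K L (Φ.alg P))) s with hc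
      have hs0' : (0:ℝ) ≤ s := le_of_lt hs0
      have hc0 : (0:ℝ) ≤ c := le_trans hs0' (le_max_right _ _)
      have hP1 : v (algebraMap K L (Φ.alg P)) ≤ 1 := by
        have := hgood P 1; rwa [Φ.coeff_one'] at this
      have hc1 : c ≤ 1 := max_le hP1 hs1
      set y := ev Φ (P ^ k) x with hy
      have hyroot : ev Φ P y = 0 := by
        rw [hy, ← ev_mul, ← pow_succ']
        exact hkill
      have hvy : v y ≤ s * c ^ k := by
        calc v y ≤ v x * c ^ k := ev_pow_contract Φ v hna hgood P hs1 k x hx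
          _ ≤ s * c ^ k := mul_le_mul_of_nonneg_right hx (pow_nonneg hc0 _)
      have hvy' : v y < v (algebraMap K L (Φ.alg P)) := by
        have hmono : s * c ^ k ≤ s * c ^ k₀ :=
          mul_le_mul_of_nonneg_left (pow_le_pow_of_le_one hc0 hc1 hkk) hs0'
        linarith
      have hvy1 : v y ≤ 1 := by
        have hck : c ^ k ≤ 1 := pow_le_one₀ hc0 hc1
        nlinarith
      have hy0 : y = 0 := by
        by_contra hy0
        have := root_lower Φ v hna hgood hP hy0 hvy1 hyroot
        linarith
      exact ih x hx (hy ▸ hy0)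

lemma tor_small_finite {s : ℝ} (hs0 : 0 < s) (hs1 : s < 1) :
    {x : L | IsTor Φ x ∧ v x ≤ s}.Finite := by
  classical
  by_cases hcase : ∀ a : Polynomial Fq, a ≠ 0 → v (algebraMap K L (Φ.alg a)) = 1
  · apply Set.Finite.subset (Set.finite_singleton (0 : L))
    rintro x ⟨⟨Q, hQ, hroot⟩, hxs⟩
    by_contra hx0
    have h1 := root_lower Φ v hna hgood hQ hx0 (le_trans hxs (le_of_lt hs1)) hroot
    rw [hcase Q hQ] at h1
    have : (1:ℝ) < 1 := lt_of_le_of_lt (le_trans h1 hxs) hs1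
    exact lt_irrefl 1 this
  · push_neg at hcase
    obtain ⟨a₀, ha₀, ha₀1⟩ := hcase
    have ha₀lt : v (algebraMap K L (Φ.alg a₀)) < 1 := by
      have := hgood a₀ 1
      rw [Φ.coeff_one'] at this
      exact lt_of_le_of_ne this ha₀1
    set I : Ideal (Polynomial Fq) :=
      { carrier := {a | v (algebraMap K L (Φ.alg a)) < 1}
        add_mem' := by
          intro a b ha hb
          simp only [Set.mem_setOf_eq] at ha hb ⊢
          calc v (algebraMap K L (Φ.alg (a + b)))
              ≤ max (v (algebraMap K L (Φ.alg a))) (v (algebraMap K L (Φ.alg b))) := by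
                rw [map_add, map_add]; exact hna _ _
            _ < 1 := max_lt ha hb
        zero_mem' := by
          simp only [Set.mem_setOf_eq, map_zero, v.map_zero]
          norm_num
        smul_mem' := by
          intro cc a ha
          simp only [Set.mem_setOf_eq, smul_eq_mul] at ha ⊢
          rw [map_mul, map_mul, v.map_mul]
          have hc : v (algebraMap K L (Φ.alg cc)) ≤ 1 := by
            have := hgood cc 1; rwa [Φ.coeff_one'] at this
          calc v (algebraMap K L (Φ.alg cc)) * v (algebraMap K L (Φ.alg a))
              ≤ 1 * v (algebraMap K L (Φ.alg a)) := mul_le_mul_of_nonneg_right hc (v.nonneg _)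
            _ = v (algebraMap K L (Φ.alg a)) := one_mul _
            _ < 1 := ha } with hIdef
    have hmemI : ∀ a : Polynomial Fq, a ∈ I ↔ v (algebraMap K L (Φ.alg a)) < 1 := fun a => Iff.rfl
    haveI hIprime : I.IsPrime := by
      constructor
      · intro htop
        have h1 : (1 : Polynomial Fq) ∈ I := htop ▸ Submodule.mem_top
        rw [hmemI, map_one, map_one, v.map_one] at h1
        exact lt_irrefl 1 h1
      · intro a b hab
        by_contra hcon
        push_neg at hcon
        obtain ⟨hga, hgb⟩ := hcon
        rw [hmemI] at hga hgb hab
        rw [map_mul, map_mul, v.map_mul] at hab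
        push_neg at hga hgb
        nlinarith
    have hIbot : I ≠ ⊥ := by
      intro hbot
      have hmem : a₀ ∈ I := (hmemI a₀).mpr ha₀lt
      rw [hbot, Submodule.mem_bot] at hmem
      exact ha₀ hmem
    set P := Submodule.IsPrincipal.generator I with hPdef
    have hPI : P ∈ I := Submodule.IsPrincipal.generator_mem I
    have hPprime : Prime P := Submodule.IsPrincipal.prime_generator_of_isPrime I hIbot
    have hP0 : P ≠ 0 := hPprime.ne_zero
    have hr1 : v (algebraMap K L (Φ.alg P)) < 1 := (hmemI P).mp hPI
    have hr0 : 0 < v (algebraMap K L (Φ.alg P)) :=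
      v.pos ((map_ne_zero_iff _ (algebraMap K L).injective).mpr (alg_ne_zero Φ hP0))
    set r := v (algebraMap K L (Φ.alg P)) with hrdef
    set c := max r s with hcdef
    have hc1 : c < 1 := max_lt hr1 hs1
    have hc0 : 0 ≤ c := le_trans (le_of_lt hs0) (le_max_right _ _)
    obtain ⟨k₀, hk₀⟩ := exists_pow_lt_of_lt_one (div_pos hr0 hs0) hc1
    have hk₀' : s * c ^ k₀ < r := by
      rw [lt_div_iff₀ hs0] at hk₀
      linarith [hk₀]
    apply Set.Finite.subset (Polynomial.finite_setOf_isRoot (dm_ne_zero Φ (pow_ne_zero k₀ hP0)))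
    rintro x ⟨⟨Q, hQ, hroot⟩, hxs⟩
    show (dm Φ (P ^ k₀) (L := L)).IsRoot x
    obtain ⟨k, a, hnd, hQeq⟩ := WfDvdMonoid.max_power_factor hQ hPprime.irreducible
    have ha0 : a ≠ 0 := by
      rintro rfl
      rw [mul_zero] at hQeq
      exact hQ hQeq
    have haI : a ∉ I := by
      intro hmem
      rw [← Ideal.span_singleton_generator I, Ideal.mem_span_singleton] at hmem
      exact hnd hmem
    have hra : v (algebraMap K L (Φ.alg a)) = 1 := by
      have hle := hgood a 1
      rw [Φ.coeff_one'] at hle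
      have hnl : ¬ v (algebraMap K L (Φ.alg a)) < 1 := fun h => haI ((hmemI a).mpr h)
      push_neg at hnl
      linarith
    set y := ev Φ (P ^ k) x with hy
    have hay : ev Φ a y = 0 := by
      rw [hy, ← ev_mul, mul_comm, ← hQeq]
      exact hroot
    have hy0 : y = 0 := by
      by_contra hy0
      have hvy : v y ≤ v x := ev_le Φ v hna hgood _ (le_trans hxs hs1.le)
      have hlow := root_lower Φ v hna hgood ha0 hy0 (le_trans hvy (le_trans hxs hs1.le)) hay
      rw [hra] at hlow
      have : (1:ℝ) ≤ s := le_trans hlow (le_trans hvy hxs)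
      linarith
    exact tor_killed Φ v hna hgood P hP0 hs0 hs1.le k₀ hk₀' k x hxs (hy ▸ hy0)

lemma ball_finite (b : L) {s : ℝ} (hs0 : 0 < s) (hs1 : s < 1) :
    {x : L | IsTor Φ x ∧ v (b - x) ≤ s}.Finite := by
  rcases Set.eq_empty_or_nonempty {x : L | IsTor Φ x ∧ v (b - x) ≤ s} with h | ⟨x₀, hx₀⟩
  · rw [h]; exact Set.finite_empty
  · have himg : (fun x => x - x₀) '' {x : L | IsTor Φ x ∧ v (b - x) ≤ s} ⊆
        {y : L | IsTor Φ y ∧ v y ≤ s} := by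
      rintro _ ⟨x, ⟨hxt, hxb⟩, rfl⟩
      refine ⟨isTor_sub Φ hxt hx₀.1, ?_⟩
      have hxx : x - x₀ = (b - x₀) - (b - x) := by ring
      show v (x - x₀) ≤ s
      rw [hxx]
      exact le_trans (na_sub v hna _ _) (max_le hx₀.2 hxb)
    have hfin := (tor_small_finite Φ v hna hgood hs0 hs1).subset himg
    exact Set.Finite.of_finite_image hfin (sub_left_injective.injOn)

end Val

end Stmt16


/-- Let `Φ` be a Drinfeld module over `K` in normal form with good reduction
at all finite places, `v` a finite place (extended to `K̄ = L`), `β ∈ K` with `|β|_v = 1`,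
and `(γ_n)` an infinite sequence of distinct torsion points. Then
`lim_n (1/[K(γ_n):K])·Σ_σ log|β − γ_n^σ|_v = 0`, the sum running over the Galois
conjugates of `γ_n`, i.e. the roots of its minimal polynomial over `K`. -/
theorem stmt_16 (Fq K L : Type*) [Field Fq] [Fintype Fq] [Field K] [Field L]
    [Algebra K L] [IsAlgClosed L]
    (Φ : DrinfeldModuleData Fq K)
    (v : AbsoluteValue L ℝ)
    (hna : ∀ x y : L, v (x + y) ≤ max (v x) (v y))
    (hgood : ∀ (a : Polynomial Fq) (i : ℕ), v (algebraMap K L ((Φ.toFun a).coeff i)) ≤ 1)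
    (hmonic : ∀ a : Polynomial Fq, a ≠ 0 →
      v (algebraMap K L ((Φ.toFun a).leadingCoeff)) = 1)
    (β : K) (hβ : v (algebraMap K L β) = 1)
    (γ : ℕ → L) (hdist : Function.Injective γ)
    (htor : ∀ n : ℕ, ∃ Q : Polynomial Fq, Q ≠ 0 ∧
      ((Φ.toFun Q).map (algebraMap K L)).eval (γ n) = 0) :
    Filter.Tendsto
      (fun n : ℕ =>
        (1 / ((minpoly K (γ n)).natDegree : ℝ)) *
          (((minpoly K (γ n)).map (algebraMap K L)).roots.map
              (fun y => Real.log (v (algebraMap K L β - y)))).sum)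
      Filter.atTop (nhds 0) := by
  classical
  have tor_gamma : ∀ n, Stmt16.IsTor Φ (γ n) := by
    intro n
    obtain ⟨Q, hQ, hev⟩ := htor n
    exact ⟨Q, hQ, hev⟩
  have tor_int : ∀ x : L, Stmt16.IsTor Φ x → IsIntegral K x := by
    rintro x ⟨Q, hQ, hev⟩
    apply IsAlgebraic.isIntegral
    refine ⟨Φ.toFun Q, Stmt16.toFun_ne_zero Φ hQ, ?_⟩
    rw [Polynomial.aeval_def, ← Polynomial.eval_map]
    exact hev
  have root_tor : ∀ n y, y ∈ ((minpoly K (γ n)).map (algebraMap K L)).roots →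
      Stmt16.IsTor Φ y := by
    intro n y hy
    obtain ⟨Q, hQ, hev⟩ := htor n
    have hdvd : minpoly K (γ n) ∣ Φ.toFun Q := minpoly.dvd K (γ n)
      (by rw [Polynomial.aeval_def, ← Polynomial.eval_map]; exact hev)
    have hroot : ((minpoly K (γ n)).map (algebraMap K L)).eval y = 0 :=
      (Polynomial.mem_roots'.mp hy).2
    exact ⟨Q, hQ, Polynomial.eval_eq_zero_of_dvd_of_eval_eq_zero
      (Polynomial.map_dvd _ hdvd) hroot⟩
  rw [Metric.tendsto_atTop]
  intro ε hε
  set s := Real.exp (-(ε/2)) with hs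
  have hs0 : 0 < s := Real.exp_pos _
  have hs1 : s < 1 := by
    rw [hs, Real.exp_lt_one_iff]
    linarith
  have hBfin := Stmt16.ball_finite Φ v hna hgood (algebraMap K L β) hs0 hs1
  set Bset := {x : L | Stmt16.IsTor Φ x ∧ v (algebraMap K L β - x) ≤ s} with hBdef
  set bad := {n : ℕ | ∃ y ∈ ((minpoly K (γ n)).map (algebraMap K L)).roots, y ∈ Bset}
    with hbaddef
  have hbadfin : bad.Finite := by
    have hsub : bad ⊆ ⋃ x ∈ Bset, {n : ℕ | minpoly K (γ n) = minpoly K x} := by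
      rintro n ⟨y, hy, hyB⟩
      apply Set.mem_biUnion hyB
      show minpoly K (γ n) = minpoly K y
      apply minpoly.eq_of_irreducible_of_monic
      · exact minpoly.irreducible (tor_int _ (tor_gamma n))
      · rw [Polynomial.aeval_def, ← Polynomial.eval_map]
        exact (Polynomial.mem_roots'.mp hy).2
      · exact minpoly.monic (tor_int _ (tor_gamma n))
    apply Set.Finite.subset _ hsub
    apply Set.Finite.biUnion hBfin
    intro x hx
    have hxint : IsIntegral K x := tor_int x hx.1
    have hne : (minpoly K x).map (algebraMap K L) ≠ 0 :=
      (Polynomial.map_ne_zero_iff (algebraMap K L).injective).mpr (minpoly.ne_zero hxint)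
    apply Set.Finite.subset ((Polynomial.finite_setOf_isRoot hne).preimage hdist.injOn)
    intro n hn
    have haev : Polynomial.aeval (γ n) (minpoly K (γ n)) = 0 := minpoly.aeval K (γ n)
    rw [hn] at haev
    show Polynomial.IsRoot ((minpoly K x).map (algebraMap K L)) (γ n)
    rw [Polynomial.IsRoot, Polynomial.eval_map, ← Polynomial.aeval_def]
    exact haev
  obtain ⟨N, hN⟩ : ∃ N : ℕ, ∀ n ≥ N, n ∉ bad := by
    obtain ⟨m, hm⟩ := hbadfin.bddAbove
    exact ⟨m + 1, fun n hn hmem => by have := hm hmem; omega⟩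
  refine ⟨N, fun n hn => ?_⟩
  have hnbad : n ∉ bad := hN n hn
  have hint : IsIntegral K (γ n) := tor_int _ (tor_gamma n)
  have hd : 0 < (minpoly K (γ n)).natDegree := minpoly.natDegree_pos hint
  have hcard : ((minpoly K (γ n)).map (algebraMap K L)).roots.card
      = (minpoly K (γ n)).natDegree :=
    by rw [← (IsAlgClosed.splits _).natDegree_eq_card_roots, Polynomial.natDegree_map]
  set S := (((minpoly K (γ n)).map (algebraMap K L)).roots.map
      (fun y => Real.log (v (algebraMap K L β - y)))) with hS
  have hboundlog : ∀ z ∈ S, -(ε/2) ≤ z ∧ z ≤ 0 := by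
    intro z hz
    obtain ⟨y, hy, rfl⟩ := Multiset.mem_map.mp hz
    have hytor : Stmt16.IsTor Φ y := root_tor n y hy
    have hy1 : v y ≤ 1 := Stmt16.tor_le_one Φ v hna hgood hmonic hytor
    have hdiff1 : v (algebraMap K L β - y) ≤ 1 :=
      le_trans (Stmt16.na_sub v hna _ _) (max_le (le_of_eq hβ) hy1)
    have hgt : s < v (algebraMap K L β - y) := by
      by_contra hle
      push_neg at hle
      exact hnbad ⟨y, hy, hytor, hle⟩
    constructor
    · have hlog := (Real.log_le_log_iff hs0 (lt_trans hs0 hgt)).mpr hgt.le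
      rwa [hs, Real.log_exp] at hlog
    · exact Real.log_nonpos (v.nonneg _) hdiff1
  have hcardS : S.card = (minpoly K (γ n)).natDegree := by
    rw [hS, Multiset.card_map, hcard]
  have hub : S.sum ≤ 0 := by
    have h := Multiset.sum_le_card_nsmul S 0 (fun z hz => (hboundlog z hz).2)
    simpa using h
  have hlb : ((minpoly K (γ n)).natDegree : ℝ) * (-(ε/2)) ≤ S.sum := by
    have h := Multiset.card_nsmul_le_sum (fun z hz => (hboundlog z hz).1)
    rwa [hcardS, nsmul_eq_mul] at h
  set d := ((minpoly K (γ n)).natDegree : ℝ) with hdr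
  have hd0 : (0:ℝ) < d := by rw [hdr]; exact_mod_cast hd
  have hbeta : dist ((1/d) * S.sum) 0 < ε := by
    rw [Real.dist_eq, sub_zero]
    have h1 : (1/d) * S.sum ≤ 0 := mul_nonpos_of_nonneg_of_nonpos (by positivity) hub
    have h2 : -(ε/2) ≤ (1/d) * S.sum := by
      have h3 := mul_le_mul_of_nonneg_left hlb (le_of_lt (one_div_pos.mpr hd0))
      calc -(ε/2) = (1/d) * (d * (-(ε/2))) := by field_simp
        _ ≤ (1/d) * S.sum := h3
    have habs : |(1/d) * S.sum| ≤ ε/2 := abs_le.mpr ⟨by linarith, by linarith⟩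
    linarith [habs]
  exact hbeta
end

section
/- Let Φ be a Drinfeld module of rank r over K, let v ∈ Ω_K be an infinite place, let β ∈ K be a nontorsion point, and suppose Bosser's lower bound holds: there exist constants C_2, C_3 (depending on Φ, β, v) such that log|Φ_P(β)|_v ≥ C_2 + C_3·deg(P)·log deg(P) for all nonzero P ∈ F_q[t]. Assume also that |Φ_t(y)|_v = |t|_v·|y|_v for |y|_v sufficiently small, with log|t|_v > 0. Then there exist constants C_0, C_1 such that for every torsion point γ killed by a monic Q ∈ F_q[t] of degree d, log|γ − β|_v ≥ C_0 + C_1·d·log d. -/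
namespace Stmt17Aux

open Polynomial

lemma na_sum {K : Type*} [Field K] (v : AbsoluteValue K ℝ)
    (hna : ∀ x y : K, v (x + y) ≤ max (v x) (v y))
    {ι : Type*} (s : Finset ι) (f : ι → K) (B : ℝ) (hB : 0 ≤ B)
    (h : ∀ i ∈ s, v (f i) ≤ B) : v (∑ i ∈ s, f i) ≤ B := by
  classical
  induction s using Finset.induction_on with
  | empty => simpa using hB
  | @insert a s hnot ih =>
      rw [Finset.sum_insert hnot]
      refine le_trans (hna _ _) (max_le (h a (Finset.mem_insert_self a s)) ?_)
      exact ih fun i hi => h i (Finset.mem_insert_of_mem hi)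

lemma eval_bound {K : Type*} [Field K] (v : AbsoluteValue K ℝ)
    (P : Polynomial K) (h0 : P.coeff 0 = 0) (w : K) (hw : v w ≤ 1) :
    v (P.eval w) ≤ (∑ i ∈ Finset.range (P.natDegree + 1), v (P.coeff i)) * v w := by
  rw [Polynomial.eval_eq_sum_range, Finset.sum_mul]
  refine le_trans (v.sum_le _ _) (Finset.sum_le_sum ?_)
  intro i _
  rcases Nat.eq_zero_or_pos i with rfl | hi
  · simp [h0]
  · rw [v.map_mul]
    refine mul_le_mul_of_nonneg_left ?_ (v.nonneg _)
    rw [v.map_pow]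
    calc (v w) ^ i ≤ (v w) ^ 1 := pow_le_pow_of_le_one (v.nonneg w) hw hi
    _ = v w := pow_one _

lemma phi_eval_add {Fq K : Type*} [Field Fq] [Fintype Fq] [Field K]
    (Φ : DrinfeldModuleData Fq K) (a : Polynomial Fq) (x y : K) :
    (Φ.toFun a).eval (x + y) = (Φ.toFun a).eval x + (Φ.toFun a).eval y := by
  set p := ringChar Fq with hp
  haveI : Fact p.Prime := ⟨CharP.char_is_prime Fq p⟩
  haveI : CharP K p :=
    charP_of_injective_ringHom
      (show Function.Injective (Φ.alg.comp (Polynomial.C : Fq →+* Polynomial Fq)) from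
        fun a b h => Polynomial.C_injective (Φ.alg_injective' h)) p
  obtain ⟨n, _, hcard⟩ := FiniteField.card Fq p
  rw [Polynomial.eval_eq_sum_range, Polynomial.eval_eq_sum_range,
    Polynomial.eval_eq_sum_range, ← Finset.sum_add_distrib]
  refine Finset.sum_congr rfl fun i _ => ?_
  by_cases hc : (Φ.toFun a).coeff i = 0
  · simp [hc]
  · obtain ⟨k, rfl⟩ := Φ.supp_q_pow' a _ hc
    rw [hcard, ← pow_mul, add_pow_char_pow, mul_add]

end Stmt17Aux

namespace Stmt17Aux

open Polynomial

lemma phi_zero {Fq K : Type*} [Field Fq] [Fintype Fq] [Field K]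
    (Φ : DrinfeldModuleData Fq K) : Φ.toFun 0 = 0 := by
  have := Φ.map_add' 0 0
  rw [add_zero] at this
  exact (left_eq_add.mp this)

lemma phi_sum {Fq K : Type*} [Field Fq] [Fintype Fq] [Field K]
    (Φ : DrinfeldModuleData Fq K) {ι : Type*} (s : Finset ι) (f : ι → Polynomial Fq) :
    Φ.toFun (∑ i ∈ s, f i) = ∑ i ∈ s, Φ.toFun (f i) := by
  classical
  induction s using Finset.induction_on with
  | empty => simpa using phi_zero Φ
  | @insert a s hnot ih =>
      rw [Finset.sum_insert hnot, Finset.sum_insert hnot, Φ.map_add', ih]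

lemma phi_eval_zero {Fq K : Type*} [Field Fq] [Fintype Fq] [Field K]
    (Φ : DrinfeldModuleData Fq K) (a : Polynomial Fq) : (Φ.toFun a).eval 0 = 0 := by
  rw [← Polynomial.coeff_zero_eq_eval_zero]
  exact Φ.coeff_zero' a

lemma phi_Xpow_eval {Fq K : Type*} [Field Fq] [Fintype Fq] [Field K]
    (Φ : DrinfeldModuleData Fq K) (j : ℕ) (w : K) :
    (Φ.toFun (Polynomial.X ^ j)).eval w =
      (fun y => (Φ.toFun Polynomial.X).eval y)^[j] w := by
  induction j generalizing w with
  | zero => simp [Φ.map_one']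
  | succ j ih =>
      rw [pow_succ, Φ.map_mul', Polynomial.eval_comp, ih, Function.iterate_succ_apply]

lemma arith (L C₁ C₃ : ℝ) (hL : 0 < L) (hC₁₃ : C₁ ≤ C₃ - L) (hC₁L : C₁ ≤ -L) (m : ℕ) :
    C₁ * ((m : ℝ) * Real.log m) + m * L ≤ 2 * L ∧
    C₁ * ((m : ℝ) * Real.log m) ≤ C₃ * ((m : ℝ) * Real.log m) - m * L + 2 * L := by
  have hs : 0 ≤ (m : ℝ) * Real.log m := by
    rcases Nat.eq_zero_or_pos m with rfl | hm
    · simp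
    · exact mul_nonneg (Nat.cast_nonneg m) (Real.log_nonneg (by exact_mod_cast hm))
  rcases le_or_gt (m : ℝ) 2 with hm | hm
  · constructor <;> nlinarith [hs, hm, hL, Nat.cast_nonneg (α := ℝ) m]
  · have h3 : (3 : ℝ) ≤ m := by
      have : 2 < m := by exact_mod_cast hm
      exact_mod_cast this
    have hlog3 : (1 : ℝ) ≤ Real.log 3 := by
      rw [Real.le_log_iff_exp_le (by norm_num : (0:ℝ) < 3)]
      exact le_of_lt (lt_trans Real.exp_one_lt_d9 (by norm_num))
    have hlog : (1 : ℝ) ≤ Real.log m :=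
      le_trans hlog3 (Real.log_le_log (by norm_num) h3)
    have hsm : (m : ℝ) ≤ (m : ℝ) * Real.log m := by
      nlinarith [Nat.cast_nonneg (α := ℝ) m]
    constructor <;> nlinarith [hs, hL, hsm]

end Stmt17Aux

/-- Let `Φ` be a Drinfeld module, `v` an infinite place, `β` nontorsion, and
suppose Bosser's bound `log|Φ_P(β)|_v ≥ C₂ + C₃·deg(P)·log deg(P)` holds for all nonzero
`P ∈ F_q[t]`. Assume `|Φ_t(y)|_v = |t|_v·|y|_v` for `|y|_v` sufficiently small and
`log|t|_v > 0`. Then there exist constants `C₀, C₁` such that for every torsion point `γ`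
killed by a monic `Q` of degree `d`, `log|γ − β|_v ≥ C₀ + C₁·d·log d`. -/
theorem stmt_17 (Fq K : Type*) [Field Fq] [Fintype Fq] [Field K]
    (Φ : DrinfeldModuleData Fq K)
    (v : AbsoluteValue K ℝ)
    (hna : ∀ x y : K, v (x + y) ≤ max (v x) (v y))
    (β : K) (hβ : ∀ Q : Polynomial Fq, Q ≠ 0 → (Φ.toFun Q).eval β ≠ 0)
    (C₂ C₃ : ℝ)
    (hBosser : ∀ P : Polynomial Fq, P ≠ 0 →
      C₂ + C₃ * (P.natDegree : ℝ) * Real.log (P.natDegree : ℝ) ≤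
        Real.log (v ((Φ.toFun P).eval β)))
    (hT : 1 < v (Φ.alg Polynomial.X))
    (ε : ℝ) (hε : 0 < ε)
    (hsmall : ∀ y : K, v y < ε →
      v ((Φ.toFun Polynomial.X).eval y) = v (Φ.alg Polynomial.X) * v y) :
    ∃ C₀ C₁ : ℝ, ∀ (γ : K) (Q : Polynomial Fq), Q.Monic → (Φ.toFun Q).eval γ = 0 →
      C₀ + C₁ * (Q.natDegree : ℝ) * Real.log (Q.natDegree : ℝ) ≤
        Real.log (v (γ - β)) := by
  classical
  set T : ℝ := v (Φ.alg Polynomial.X) with hTdef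
  have hT0 : (0 : ℝ) < T := lt_trans one_pos hT
  have hL : 0 < Real.log T := Real.log_pos hT
  set ε' : ℝ := min ε 1 with hε'def
  have hε'0 : 0 < ε' := lt_min hε one_pos
  have hε'ε : ε' ≤ ε := min_le_left _ _
  have hε'1 : ε' ≤ 1 := min_le_right _ _
  -- bound on the "constant" part of the Drinfeld module
  set g : Fq → ℝ := fun a =>
    ∑ i ∈ Finset.range ((Φ.toFun (Polynomial.C a)).natDegree + 1),
      v ((Φ.toFun (Polynomial.C a)).coeff i) with hgdef
  obtain ⟨B, hB⟩ := (Set.finite_range g).bddAbove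
  set M : ℝ := max B 1 with hMdef
  have hM1 : (1 : ℝ) ≤ M := le_max_right _ _
  have hM0 : (0 : ℝ) < M := lt_of_lt_of_le one_pos hM1
  have hMa : ∀ a : Fq, g a ≤ M :=
    fun a => le_trans (hB (Set.mem_range_self a)) (le_max_left _ _)
  set φ : K → K := fun y => (Φ.toFun Polynomial.X).eval y with hφdef
  refine ⟨min (Real.log ε') (C₂ - Real.log M) - 2 * Real.log T,
          min C₃ 0 - Real.log T, ?_⟩
  intro γ Q hmon hγ
  set C₀ : ℝ := min (Real.log ε') (C₂ - Real.log M) - 2 * Real.log T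
  set C₁ : ℝ := min C₃ 0 - Real.log T with hC₁def
  set m : ℕ := Q.natDegree with hmdef
  have hQ0 : Q ≠ 0 := hmon.ne_zero
  set z : K := β - γ with hzdef
  have hΦz : (Φ.toFun Q).eval z = (Φ.toFun Q).eval β := by
    have := Stmt17Aux.phi_eval_add Φ Q z γ
    rw [show z + γ = β by rw [hzdef]; ring, hγ, add_zero] at this
    exact this.symm
  have hΦzne : (Φ.toFun Q).eval z ≠ 0 := by rw [hΦz]; exact hβ Q hQ0
  have hzne : z ≠ 0 := by
    intro h
    exact hΦzne (h ▸ Stmt17Aux.phi_eval_zero Φ Q)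
  have hvz : 0 < v z := v.pos hzne
  have hvγβ : v (γ - β) = v z := by
    rw [show γ - β = -z by rw [hzdef]; ring, v.map_neg]
  rw [hvγβ]
  have harith := Stmt17Aux.arith (Real.log T) C₁ C₃ hL
    (by rw [hC₁def]; have := min_le_left C₃ 0; linarith)
    (by rw [hC₁def]; have := min_le_right C₃ 0; linarith) m
  have hTm0 : (0 : ℝ) < T ^ m := pow_pos hT0 m
  rcases lt_or_ge (v z) (ε' / T ^ m) with hcase | hcase
  · -- small case: use Bosser
    have hsm2 : ∀ j ≤ m, T ^ j * v z < ε' := by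
      intro j hj
      have h1 : T ^ j * v z < T ^ j * (ε' / T ^ m) :=
        mul_lt_mul_of_pos_left hcase (pow_pos hT0 j)
      have h2 : T ^ j * (ε' / T ^ m) ≤ T ^ m * (ε' / T ^ m) :=
        mul_le_mul_of_nonneg_right (pow_le_pow_right₀ (le_of_lt hT) hj)
          (le_of_lt (div_pos hε'0 hTm0))
      rw [mul_div_cancel₀ _ (ne_of_gt hTm0)] at h2
      linarith
    have hiter : ∀ j ≤ m, v (φ^[j] z) = T ^ j * v z := by
      intro j
      induction j with
      | zero => intro _; simp
      | succ j ih =>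
          intro hj
          have hj' : j ≤ m := Nat.le_of_succ_le hj
          have h1 := ih hj'
          have hlt : v (φ^[j] z) < ε := by
            rw [h1]; exact lt_of_lt_of_le (hsm2 j hj') hε'ε
          rw [Function.iterate_succ_apply', hφdef]
          simp only []
          rw [hsmall _ hlt, h1, pow_succ]
          ring
    have hdecomp : (Φ.toFun Q).eval z =
        ∑ j ∈ Q.support, (Φ.toFun (Polynomial.C (Q.coeff j))).eval (φ^[j] z) := by
      conv_lhs => rw [Q.as_sum_support, Stmt17Aux.phi_sum, Polynomial.eval_finset_sum]
      refine Finset.sum_congr rfl fun j _ => ?_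
      rw [← Polynomial.C_mul_X_pow_eq_monomial, Φ.map_mul', Polynomial.eval_comp,
        Stmt17Aux.phi_Xpow_eval]
    have hbound : v ((Φ.toFun Q).eval z) ≤ M * (T ^ m * v z) := by
      rw [hdecomp]
      refine Stmt17Aux.na_sum v hna _ _ _
        (mul_nonneg (le_of_lt hM0) (mul_nonneg (le_of_lt hTm0) (v.nonneg z))) ?_
      intro j hj
      have hjm : j ≤ m := Polynomial.le_natDegree_of_mem_supp j hj
      have hw1 : v (φ^[j] z) ≤ 1 := by
        rw [hiter j hjm]
        exact le_of_lt (lt_of_lt_of_le (hsm2 j hjm) hε'1)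
      calc v ((Φ.toFun (Polynomial.C (Q.coeff j))).eval (φ^[j] z))
          ≤ g (Q.coeff j) * v (φ^[j] z) :=
            Stmt17Aux.eval_bound v _ (Φ.coeff_zero' _) _ hw1
        _ ≤ M * v (φ^[j] z) :=
            mul_le_mul_of_nonneg_right (hMa _) (v.nonneg _)
        _ = M * (T ^ j * v z) := by rw [hiter j hjm]
        _ ≤ M * (T ^ m * v z) := by
            refine mul_le_mul_of_nonneg_left ?_ (le_of_lt hM0)
            exact mul_le_mul_of_nonneg_right
              (pow_le_pow_right₀ (le_of_lt hT) hjm) (v.nonneg z)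
    have h1 : C₂ + C₃ * (m : ℝ) * Real.log m ≤ Real.log (v ((Φ.toFun Q).eval z)) := by
      rw [hΦz]; exact hBosser Q hQ0
    have h2 : Real.log (v ((Φ.toFun Q).eval z)) ≤
        Real.log M + ((m : ℝ) * Real.log T + Real.log (v z)) := by
      refine le_trans (Real.log_le_log (v.pos hΦzne) hbound) ?_
      rw [Real.log_mul (ne_of_gt hM0) (ne_of_gt (mul_pos hTm0 hvz)),
        Real.log_mul (ne_of_gt hTm0) (ne_of_gt hvz), Real.log_pow]
    have hC₀ : C₀ ≤ C₂ - Real.log M - 2 * Real.log T := by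
      have := min_le_right (Real.log ε') (C₂ - Real.log M)
      simp only [C₀]; linarith
    have := harith.2
    nlinarith [h1, h2, this, hC₀]
  · -- large case
    have hlog : Real.log (ε' / T ^ m) ≤ Real.log (v z) :=
      Real.log_le_log (div_pos hε'0 hTm0) hcase
    rw [Real.log_div (ne_of_gt hε'0) (ne_of_gt hTm0), Real.log_pow] at hlog
    have hC₀ : C₀ ≤ Real.log ε' - 2 * Real.log T := by
      have := min_le_left (Real.log ε') (C₂ - Real.log M)
      simp only [C₀]; linarith
    have := harith.1
    nlinarith [hlog, this, hC₀]
end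

section
/- Let K be a finite extension of F_q(t) with the product formula, and let Φ be a Drinfeld module over K in normal form with good reduction at all finite places. Let S be a finite set of places of K containing all infinite places, and let β ∈ K be nontorsion. Suppose that for every place v ∈ Ω_K and every infinite sequence (γ_n) of distinct torsion points, lim_n (1/[K(γ_n):K]) Σ_σ log|β − γ_n^σ|_v = ĥ_{Φ,v}(β), and that every torsion point which is S-integral with respect to β satisfies log|β − γ^σ|_v = log^+|β|_v for all v ∉ S and all σ. Then there are at most finitely many torsion points of Φ that are S-integral with respect to β. -/
/-- `γ ∈ K̄ = L` is a torsion point of `Φ`. -/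
def IsTorsionPt (Fq K L : Type*) [Field Fq] [Fintype Fq] [Field K] [Field L] [Algebra K L]
    (Φ : DrinfeldModuleData Fq K) (γ : L) : Prop :=
  ∃ Q : Polynomial Fq, Q ≠ 0 ∧ ((Φ.toFun Q).map (algebraMap K L)).eval γ = 0

/-- The Galois-averaged local contribution
`(1/[K(γ):K]) Σ_σ log|β − γ^σ|_v`, the conjugates `γ^σ` being the roots of the
minimal polynomial of `γ` over `K`. -/
noncomputable def conjAvgLog (K L : Type*) [Field K] [Field L] [Algebra K L]
    (v : AbsoluteValue L ℝ) (β : K) (γ : L) : ℝ :=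
  (1 / ((minpoly K γ).natDegree : ℝ)) *
    (((minpoly K γ).map (algebraMap K L)).roots.map
        (fun y => Real.log (v (algebraMap K L β - y)))).sum

/-- `γ` is `S`-integral with respect to `β`: for every place `ω ∉ S` and every conjugate
`γ^σ`: if `|β|_ω ≤ 1` then `|β − γ^σ|_ω ≥ 1`, and if `|β|_ω > 1` then `|γ^σ|_ω ≤ 1`. -/
def SIntegral (K L : Type*) [Field K] [Field L] [Algebra K L]
    {Ω : Type*} (w : Ω → AbsoluteValue L ℝ) (S : Finset Ω) (β : K) (γ : L) : Prop :=
  ∀ ω : Ω, ω ∉ S → ∀ y ∈ ((minpoly K γ).map (algebraMap K L)).roots,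
    ((w ω) (algebraMap K L β) ≤ 1 → 1 ≤ (w ω) (algebraMap K L β - y)) ∧
      (1 < (w ω) (algebraMap K L β) → (w ω) y ≤ 1)

/-- Ih's conjecture for Drinfeld modules, conditional form. `K` is a function
field with the product formula (stated here for the Galois-averaged conjugate sums), `Φ` a
Drinfeld module in normal form with good reduction at all finite places (those outside
`Sinf ⊆ S`), `β ∈ K` nontorsion (so its canonical height `ĥ_Φ(β) = Σ_ω ĥ_{Φ,ω}(β) > 0`).
Assuming the equidistribution limit `lim_n conjAvgLog = ĥ_{Φ,ω}(β)` for every place `ω`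
and every sequence of distinct torsion points, and that `S`-integral torsion points
satisfy `log|β − γ^σ|_ω = log⁺|β|_ω` for `ω ∉ S` (which also equals `ĥ_{Φ,ω}(β)` there),
there are at most finitely many torsion points of `Φ` that are `S`-integral w.r.t. `β`. -/
theorem stmt_19 (Fq K L : Type*) [Field Fq] [Fintype Fq] [Field K] [Field L]
    [Algebra K L] [IsAlgClosed L]
    (Φ : DrinfeldModuleData Fq K)
    (Ω : Type*) (w : Ω → AbsoluteValue L ℝ)
    (S Sinf : Finset Ω) (hSinf : Sinf ⊆ S)
    (hgood : ∀ ω : Ω, ω ∉ Sinf → ∀ (a : Polynomial Fq) (i : ℕ),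
      (w ω) (algebraMap K L ((Φ.toFun a).coeff i)) ≤ 1)
    (β : K) (hβ : ∀ Q : Polynomial Fq, Q ≠ 0 → (Φ.toFun Q).eval β ≠ 0)
    (hhat : Ω → ℝ) (hhat_fin : (Function.support hhat).Finite)
    (hhat_pos : 0 < ∑ᶠ ω, hhat ω)
    (hhat_out : ∀ ω : Ω, ω ∉ S →
      hhat ω = Real.log (max ((w ω) (algebraMap K L β)) 1))
    (hprod : ∀ γ : L, algebraMap K L β ≠ γ →
      (Function.support fun ω => conjAvgLog K L (w ω) β γ).Finite ∧
        ∑ᶠ ω, conjAvgLog K L (w ω) β γ = 0)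
    (hequi : ∀ (ω : Ω) (γs : ℕ → L), (∀ n, IsTorsionPt Fq K L Φ (γs n)) →
      Function.Injective γs →
      Filter.Tendsto (fun n => conjAvgLog K L (w ω) β (γs n)) Filter.atTop (nhds (hhat ω)))
    (hSint : ∀ γ : L, IsTorsionPt Fq K L Φ γ → SIntegral K L w S β γ →
      ∀ ω : Ω, ω ∉ S → ∀ y ∈ ((minpoly K γ).map (algebraMap K L)).roots,
        Real.log ((w ω) (algebraMap K L β - y)) =
          Real.log (max ((w ω) (algebraMap K L β)) 1)) :
    {γ : L | IsTorsionPt Fq K L Φ γ ∧ SIntegral K L w S β γ}.Finite := by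
  by_contra hinf
  rw [← Set.not_infinite, not_not] at hinf
  set T := {γ : L | IsTorsionPt Fq K L Φ γ ∧ SIntegral K L w S β γ} with hT
  let e : ℕ ↪ T := hinf.natEmbedding
  set γs : ℕ → L := fun n => (e n : L) with hγs
  have hinj : Function.Injective γs := fun a b h => e.injective (Subtype.ext h)
  have htor : ∀ n, IsTorsionPt Fq K L Φ (γs n) := fun n => (e n).2.1
  have hSI : ∀ n, SIntegral K L w S β (γs n) := fun n => (e n).2.2
  -- β is not equal to any torsion point
  have hne : ∀ n, algebraMap K L β ≠ γs n := by
    intro n heq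
    obtain ⟨Q, hQ, hev⟩ := htor n
    rw [← heq] at hev
    rw [Polynomial.eval_map, Polynomial.eval₂_at_apply] at hev
    exact hβ Q hQ ((map_eq_zero (algebraMap K L)).mp hev)
  -- outside S, the local average equals hhat
  have hconst : ∀ n, ∀ ω ∉ S, conjAvgLog K L (w ω) β (γs n) = hhat ω := by
    intro n ω hω
    obtain ⟨Q, hQ, hev⟩ := htor n
    have hP0 : Φ.toFun Q ≠ 0 := by
      intro h
      have := Φ.degree_pos' Q hQ
      rw [h] at this; simp at this
    have hint : IsIntegral K (γs n) := by
      apply IsAlgebraic.isIntegral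
      exact ⟨Φ.toFun Q, hP0, by rwa [Polynomial.aeval_def, ← Polynomial.eval_map]⟩
    have hd : 0 < (minpoly K (γs n)).natDegree := minpoly.natDegree_pos hint
    have hcard : Multiset.card (((minpoly K (γs n)).map (algebraMap K L)).roots)
        = (minpoly K (γs n)).natDegree :=
      IsAlgClosed.card_roots_map_eq_natDegree_from_simpleRing (algebraMap K L) (minpoly K (γs n))
    have hroots : ∀ y ∈ ((minpoly K (γs n)).map (algebraMap K L)).roots,
        Real.log ((w ω) (algebraMap K L β - y)) = hhat ω := by
      intro y hy
      rw [hSint (γs n) (htor n) (hSI n) ω hω y hy, hhat_out ω hω]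
    unfold conjAvgLog
    rw [Multiset.map_congr rfl hroots]
    rw [Multiset.map_const', Multiset.sum_replicate, hcard, nsmul_eq_mul]
    field_simp
  -- the per-n sum over S is constant
  have hsum : ∀ n, ∑ ω ∈ S, (conjAvgLog K L (w ω) β (γs n) - hhat ω)
      = -∑ᶠ ω, hhat ω := by
    intro n
    have hfin := (hprod (γs n) (hne n)).1
    have hzero := (hprod (γs n) (hne n)).2
    have hsupp : (Function.support fun ω =>
        conjAvgLog K L (w ω) β (γs n) - hhat ω) ⊆ ↑S := by
      intro ω hω
      by_contra hωS
      exact hω (by simp [hconst n ω hωS])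
    have := finsum_eq_finset_sum_of_support_subset
      (fun ω => conjAvgLog K L (w ω) β (γs n) - hhat ω) hsupp
    rw [← this, finsum_sub_distrib hfin hhat_fin, hzero, zero_sub]
  -- but the sum tends to 0
  have hlim : Filter.Tendsto
      (fun n => ∑ ω ∈ S, (conjAvgLog K L (w ω) β (γs n) - hhat ω))
      Filter.atTop (nhds 0) := by
    have : (0 : ℝ) = ∑ ω ∈ S, (0 : ℝ) := by simp
    rw [this]
    apply tendsto_finset_sum
    intro ω _
    have h := (hequi ω γs htor hinj).sub (tendsto_const_nhds (x := hhat ω))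
    simpa using h
  have : (-∑ᶠ ω, hhat ω) = 0 := by
    have hc : Filter.Tendsto
        (fun _ : ℕ => -∑ᶠ ω, hhat ω) Filter.atTop (nhds (-∑ᶠ ω, hhat ω)) :=
      tendsto_const_nhds
    have := hlim.congr hsum
    exact tendsto_nhds_unique hc this
  linarith
end
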